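/- arXiv:1509.07426 — 9 statements merged into one kernel-verified Lean document; each statement's English description precedes it below -/
import Mathlib

section
/- Let A₁, A₂ be real m×n matrices, let B₁, B₂ be real m×m symmetric positive definite matrices, and let λ ∈ [0,1]. Then λ·A₁ᵀB₁⁻¹A₁ + (1−λ)·A₂ᵀB₂⁻¹A₂ − (λA₁+(1−λ)A₂)ᵀ(λB₁+(1−λ)B₂)⁻¹(λA₁+(1−λ)A₂) is positive semidefinite; that is, the matrix fractional function (A,B) ↦ AᵀB⁻¹A is jointly matrix convex in A and in positive definite B. -/
open Matrix

lemma herm_smul {p : Type*} {M : Matrix p p ℝ} (hM : M.IsHermitian) (c : ℝ) :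
    (c • M).IsHermitian := by
  unfold Matrix.IsHermitian at *
  rw [show (c • M)ᴴ = c • Mᴴ from by ext i j; simp [Matrix.conjTranspose_apply], hM]

lemma psd_smul {p : Type*} [Fintype p] {M : Matrix p p ℝ} (hM : M.PosSemidef) {c : ℝ}
    (hc : 0 ≤ c) : (c • M).PosSemidef := by
  refine .of_dotProduct_mulVec_nonneg (herm_smul hM.1 c) fun x => ?_
  rw [smul_mulVec, dotProduct_smul]
  exact smul_nonneg hc (hM.dotProduct_mulVec_nonneg x)

lemma posdef_convex {m : ℕ} {B₁ B₂ : Matrix (Fin m) (Fin m) ℝ}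
    (hB₁ : B₁.PosDef) (hB₂ : B₂.PosDef) {l : ℝ} (hl0 : 0 ≤ l) (hl1 : l ≤ 1) :
    (l • B₁ + (1 - l) • B₂).PosDef := by
  rcases eq_or_lt_of_le hl0 with h | h
  · exact Matrix.PosDef.posSemidef_add (psd_smul hB₁.posSemidef hl0)
      (PosDef.of_dotProduct_mulVec_pos (herm_smul hB₂.1 _) fun x hx => by
        rw [smul_mulVec, dotProduct_smul]
        exact smul_pos (by rw [← h]; norm_num) (hB₂.dotProduct_mulVec_pos hx))
  · exact Matrix.PosDef.add_posSemidef
      (PosDef.of_dotProduct_mulVec_pos (herm_smul hB₁.1 _) fun x hx => by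
        rw [smul_mulVec, dotProduct_smul]
        exact smul_pos h (hB₁.dotProduct_mulVec_pos hx))
      (psd_smul hB₂.posSemidef (by linarith))

/-- The matrix fractional function (A, B) ↦ AᵀB⁻¹A is jointly matrix convex
in A and positive definite B. -/
theorem matrix_fractional_jointly_convex (m n : ℕ)
    (A₁ A₂ : Matrix (Fin m) (Fin n) ℝ) (B₁ B₂ : Matrix (Fin m) (Fin m) ℝ)
    (hB₁ : B₁.PosDef) (hB₂ : B₂.PosDef) (l : ℝ) (hl0 : 0 ≤ l) (hl1 : l ≤ 1) :
    (l • (A₁ᵀ * B₁⁻¹ * A₁) + (1 - l) • (A₂ᵀ * B₂⁻¹ * A₂) -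
      (l • A₁ + (1 - l) • A₂)ᵀ * (l • B₁ + (1 - l) • B₂)⁻¹ *
        (l • A₁ + (1 - l) • A₂)).PosSemidef := by
  have hct : ∀ {p q : ℕ} (M : Matrix (Fin p) (Fin q) ℝ), Mᴴ = Mᵀ := fun M => by
    ext i j; simp
  have hB : (l • B₁ + (1 - l) • B₂).PosDef := posdef_convex hB₁ hB₂ hl0 hl1
  have hi₁ : Invertible B₁ := hB₁.isUnit.invertible
  have hi₂ : Invertible B₂ := hB₂.isUnit.invertible
  have hi : Invertible (l • B₁ + (1 - l) • B₂) := hB.isUnit.invertible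
  have h₁ : (fromBlocks B₁ A₁ A₁ᵀ (A₁ᵀ * B₁⁻¹ * A₁)).PosSemidef := by
    rw [← hct A₁, PosDef.fromBlocks₁₁ _ _ hB₁, hct A₁]
    simpa using Matrix.PosSemidef.zero
  have h₂ : (fromBlocks B₂ A₂ A₂ᵀ (A₂ᵀ * B₂⁻¹ * A₂)).PosSemidef := by
    rw [← hct A₂, PosDef.fromBlocks₁₁ _ _ hB₂, hct A₂]
    simpa using Matrix.PosSemidef.zero
  have hsum : (fromBlocks (l • B₁ + (1 - l) • B₂) (l • A₁ + (1 - l) • A₂)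
      (l • A₁ᵀ + (1 - l) • A₂ᵀ)
      (l • (A₁ᵀ * B₁⁻¹ * A₁) + (1 - l) • (A₂ᵀ * B₂⁻¹ * A₂))).PosSemidef := by
    rw [← fromBlocks_add, ← fromBlocks_smul, ← fromBlocks_smul]
    exact (psd_smul h₁ hl0).add (psd_smul h₂ (by linarith))
  have key := (PosDef.fromBlocks₁₁ (l • A₁ + (1 - l) • A₂)
      (l • (A₁ᵀ * B₁⁻¹ * A₁) + (1 - l) • (A₂ᵀ * B₂⁻¹ * A₂)) hB).mp
  rw [hct] at key
  have htr : (l • A₁ + (1 - l) • A₂)ᵀ = l • A₁ᵀ + (1 - l) • A₂ᵀ := by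
    simp [transpose_add, transpose_smul]
  rw [htr] at key
  exact key hsum
end

section
/- Let A be a real n×n symmetric positive definite matrix and let B be a real n×n symmetric positive semidefinite matrix all of whose diagonal entries are strictly positive. Then the Hadamard (entrywise) product A ⊙ B is positive definite. -/
open Matrix
open scoped Matrix

/-- Schur: the Hadamard product of a positive definite matrix with a
positive semidefinite matrix having strictly positive diagonal entries is positive definite. -/
theorem hadamard_posDef_of_posDef_posSemidef (n : ℕ)
    (A B : Matrix (Fin n) (Fin n) ℝ) (hA : A.PosDef) (hB : B.PosSemidef)
    (hBdiag : ∀ i, 0 < B i i) :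
    (A ⊙ B).PosDef := by
  classical
  obtain ⟨C, hC⟩ : ∃ C : Matrix (Fin n) (Fin n) ℝ, B = Cᴴ * C := by
    open scoped MatrixOrder in
    exact CStarAlgebra.nonneg_iff_eq_star_mul_self.mp hB.nonneg
  have hBapp : ∀ i j, B i j = ∑ k, C k i * C k j := by
    intro i j
    simp [hC, Matrix.mul_apply, conjTranspose_apply]
  rw [posDef_iff_dotProduct_mulVec]
  constructor
  · -- Hermitian
    ext i j
    simp only [conjTranspose_apply, hadamard_apply, star_trivial]
    rw [show A j i = A i j from by
        have := congrFun (congrFun hA.1 i) j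
        simpa using this,
      show B j i = B i j from by
        have := congrFun (congrFun hB.1 i) j
        simpa using this]
  · intro x hx
    -- key rewriting of the quadratic form
    have key : dotProduct (star x) ((A ⊙ B) *ᵥ x)
        = ∑ k, dotProduct (star (fun i => x i * C k i))
            (A *ᵥ (fun i => x i * C k i)) := by
      calc dotProduct (star x) ((A ⊙ B) *ᵥ x)
          = ∑ i, ∑ k, ∑ j, x i * C k i * (A i j * (x j * C k j)) := by
            simp only [dotProduct, mulVec, star_trivial, hadamard_apply, Pi.star_apply,
              hBapp, Finset.mul_sum, Finset.sum_mul]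
            refine Finset.sum_congr rfl fun i _ => ?_
            rw [Finset.sum_comm]
            refine Finset.sum_congr rfl fun k _ => Finset.sum_congr rfl fun j _ => by ring
        _ = ∑ k, ∑ i, ∑ j, x i * C k i * (A i j * (x j * C k j)) := Finset.sum_comm
        _ = ∑ k, dotProduct (star (fun i => x i * C k i))
              (A *ᵥ (fun i => x i * C k i)) := by
            simp only [dotProduct, mulVec, star_trivial, Pi.star_apply, Finset.mul_sum]
    rw [key]
    -- each term is nonnegative
    have hnn : ∀ k, 0 ≤ dotProduct (star (fun i => x i * C k i))
        (A *ᵥ (fun i => x i * C k i)) := fun k =>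
      (posSemidef_iff_dotProduct_mulVec.mp hA.posSemidef).2 _
    -- some term is positive
    obtain ⟨i, hi⟩ := Function.ne_iff.mp hx
    have hBi := hBdiag i
    rw [hBapp i i] at hBi
    have : ∃ k, C k i ≠ 0 := by
      by_contra h
      push_neg at h
      simp [h] at hBi
    obtain ⟨k, hk⟩ := this
    have hyk : (fun j => x j * C k j) ≠ 0 := by
      intro h
      exact (mul_ne_zero hi hk) (congrFun h i)
    exact Finset.sum_pos' (fun k _ => hnn k)
      ⟨k, Finset.mem_univ k, (posDef_iff_dotProduct_mulVec.mp hA).2 hyk⟩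
end

section
/- Let V₁,…,V_m be real n×n symmetric positive semidefinite matrices, and let a₁,…,a_m and b₁,…,b_m be strictly positive real numbers such that Ω = Σᵢ bᵢ Vᵢ is positive definite. Then (Σᵢ aᵢ Vᵢ)·Ω⁻¹·(Σᵢ aᵢ Vᵢ) ⪯ Σᵢ (aᵢ²/bᵢ)·Vᵢ, where ⪯ denotes the Loewner order (i.e., the difference Σᵢ (aᵢ²/bᵢ)·Vᵢ − (Σᵢ aᵢ Vᵢ)·Ω⁻¹·(Σᵢ aᵢ Vᵢ) is positive semidefinite). -/
open Matrix

section helpers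
variable {m n : ℕ}

lemma my_sum_mulVec (A : Fin m → Matrix (Fin n) (Fin n) ℝ) (z : Fin n → ℝ) :
    (∑ i, A i) *ᵥ z = ∑ i, (A i) *ᵥ z := by
  ext j
  simp only [Matrix.mulVec, dotProduct, Matrix.sum_apply, Finset.sum_mul,
    Finset.sum_apply]
  exact Finset.sum_comm

lemma my_dot_sum (x : Fin n → ℝ) (v : Fin m → (Fin n → ℝ)) :
    x ⬝ᵥ (∑ i, v i) = ∑ i, x ⬝ᵥ v i := by
  simp only [dotProduct, Finset.sum_apply, Finset.mul_sum]
  exact Finset.sum_comm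

lemma quad_sum (c : Fin m → ℝ) (V : Fin m → Matrix (Fin n) (Fin n) ℝ)
    (x z : Fin n → ℝ) :
    x ⬝ᵥ ((∑ i, c i • V i) *ᵥ z) = ∑ i, c i * (x ⬝ᵥ V i *ᵥ z) := by
  rw [my_sum_mulVec, my_dot_sum]
  refine Finset.sum_congr rfl fun i _ => ?_
  rw [smul_mulVec, dotProduct_smul, smul_eq_mul]

lemma herm_sum (c : Fin m → ℝ) (V : Fin m → Matrix (Fin n) (Fin n) ℝ)
    (hV : ∀ i, (V i).IsHermitian) : (∑ i, c i • V i).IsHermitian := by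
  have hsym : ∀ i j k, V i k j = V i j k := fun i j k => by
    simpa using (hV i).apply j k
  apply Matrix.IsHermitian.ext
  intro j k
  simp only [Matrix.sum_apply, Matrix.smul_apply, smul_eq_mul, star_trivial]
  exact Finset.sum_congr rfl fun i _ => by rw [hsym]

lemma sym_swap {M : Matrix (Fin n) (Fin n) ℝ} (h : M.IsHermitian)
    (x y : Fin n → ℝ) : x ⬝ᵥ M *ᵥ y = y ⬝ᵥ M *ᵥ x := by
  have ht : Mᵀ = M := by
    ext j k; simpa using h.apply j k
  rw [dotProduct_mulVec, ← mulVec_transpose, ht, dotProduct_comm]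
end helpers

/-- the key MM majorization
`(∑ aᵢVᵢ) Ω⁻¹ (∑ aᵢVᵢ) ⪯ ∑ (aᵢ²/bᵢ) Vᵢ` where `Ω = ∑ bᵢVᵢ` is positive definite. -/
theorem mm_majorization (m n : ℕ) (V : Fin m → Matrix (Fin n) (Fin n) ℝ)
    (hV : ∀ i, (V i).PosSemidef) (a b : Fin m → ℝ)
    (ha : ∀ i, 0 < a i) (hb : ∀ i, 0 < b i)
    (hΩ : (∑ i, b i • V i).PosDef) :
    ((∑ i, (a i ^ 2 / b i) • V i) -
      (∑ i, a i • V i) * (∑ i, b i • V i)⁻¹ * (∑ i, a i • V i)).PosSemidef := by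
  classical
  set S := ∑ i, a i • V i with hSdef
  set Ω := ∑ i, b i • V i with hΩdef
  have hΩinv : Ω⁻¹.PosDef := Matrix.posDef_inv_iff.2 hΩ
  have hdet : IsUnit Ω.det := isUnit_iff_isUnit_det Ω |>.1 hΩ.isUnit
  have hSsym : S.IsHermitian := herm_sum a V fun i => (hV i).1
  have hΩIsym : Ω⁻¹.IsHermitian := hΩinv.1
  have hherm : ((∑ i, (a i ^ 2 / b i) • V i) - S * Ω⁻¹ * S).IsHermitian := by
    refine Matrix.IsHermitian.sub (herm_sum _ V fun i => (hV i).1) ?_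
    have h1 : (S * Ω⁻¹ * S)ᴴ = Sᴴ * (Ω⁻¹)ᴴ * Sᴴ := by
      simp [conjTranspose_mul, mul_assoc]
    show (S * Ω⁻¹ * S)ᴴ = S * Ω⁻¹ * S
    rw [h1, hSsym.eq, hΩIsym.eq]
  refine Matrix.PosSemidef.of_dotProduct_mulVec_nonneg hherm fun x => ?_
  set y := Ω⁻¹ *ᵥ (S *ᵥ x) with hy
  have hΩy : Ω *ᵥ y = S *ᵥ x := by
    rw [hy, mulVec_mulVec, Matrix.mul_nonsing_inv _ hdet, one_mulVec]
  have hxSy : x ⬝ᵥ (S * Ω⁻¹ * S) *ᵥ x = x ⬝ᵥ S *ᵥ y := by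
    rw [hy, ← mulVec_mulVec, ← mulVec_mulVec]
  have hyΩy : y ⬝ᵥ Ω *ᵥ y = x ⬝ᵥ S *ᵥ y := by
    rw [hΩy]; exact sym_swap hSsym _ _
  have key : ∀ i, 0 ≤ a i ^ 2 / b i * (x ⬝ᵥ V i *ᵥ x) - 2 * (a i * (x ⬝ᵥ V i *ᵥ y))
      + b i * (y ⬝ᵥ V i *ᵥ y) := by
    intro i
    have h0 : 0 ≤ ((a i / b i) • x - y) ⬝ᵥ V i *ᵥ ((a i / b i) • x - y) := by
      simpa using (hV i).dotProduct_mulVec_nonneg ((a i / b i) • x - y)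
    have hswap : y ⬝ᵥ V i *ᵥ x = x ⬝ᵥ V i *ᵥ y := sym_swap (hV i).1 _ _
    have hbne : b i ≠ 0 := (hb i).ne'
    have hexp : ((a i / b i) • x - y) ⬝ᵥ V i *ᵥ ((a i / b i) • x - y)
        = (a i / b i)^2 * (x ⬝ᵥ V i *ᵥ x) - 2 * (a i / b i) * (x ⬝ᵥ V i *ᵥ y)
          + y ⬝ᵥ V i *ᵥ y := by
      simp [sub_dotProduct, dotProduct_sub, mulVec_sub, mulVec_smul, smul_dotProduct,
        dotProduct_smul, hswap, smul_eq_mul]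
      ring
    have hb0 : 0 ≤ b i * ((a i / b i)^2 * (x ⬝ᵥ V i *ᵥ x)
        - 2 * (a i / b i) * (x ⬝ᵥ V i *ᵥ y) + y ⬝ᵥ V i *ᵥ y) :=
      mul_nonneg (hb i).le (hexp ▸ h0)
    have heq : b i * ((a i / b i)^2 * (x ⬝ᵥ V i *ᵥ x)
        - 2 * (a i / b i) * (x ⬝ᵥ V i *ᵥ y) + y ⬝ᵥ V i *ᵥ y)
        = a i ^ 2 / b i * (x ⬝ᵥ V i *ᵥ x) - 2 * (a i * (x ⬝ᵥ V i *ᵥ y))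
          + b i * (y ⬝ᵥ V i *ᵥ y) := by
      field_simp
    linarith [heq ▸ hb0]
  have expand : x ⬝ᵥ ((∑ i, (a i ^ 2 / b i) • V i) - S * Ω⁻¹ * S) *ᵥ x
      = ∑ i, (a i ^ 2 / b i * (x ⬝ᵥ V i *ᵥ x) - 2 * (a i * (x ⬝ᵥ V i *ᵥ y))
          + b i * (y ⬝ᵥ V i *ᵥ y)) := by
    have h1 : x ⬝ᵥ (∑ i, (a i ^ 2 / b i) • V i) *ᵥ x
        = ∑ i, a i ^ 2 / b i * (x ⬝ᵥ V i *ᵥ x) := quad_sum _ _ _ _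
    have h2 : x ⬝ᵥ S *ᵥ y = ∑ i, a i * (x ⬝ᵥ V i *ᵥ y) := quad_sum _ _ _ _
    have h3 : y ⬝ᵥ Ω *ᵥ y = ∑ i, b i * (y ⬝ᵥ V i *ᵥ y) := quad_sum _ _ _ _
    have h5 : x ⬝ᵥ S *ᵥ y = 2 * (∑ i, a i * (x ⬝ᵥ V i *ᵥ y))
        - ∑ i, b i * (y ⬝ᵥ V i *ᵥ y) := by
      rw [← h2, ← h3, hyΩy]; ring
    rw [sub_mulVec, dotProduct_sub, hxSy, h1, h5, Finset.mul_sum,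
      ← Finset.sum_sub_distrib, ← Finset.sum_sub_distrib]
    exact Finset.sum_congr rfl fun i _ => by ring
  rw [star_trivial, expand]
  exact Finset.sum_nonneg fun i _ => key i
end

section
/- Fix real n×n symmetric positive semidefinite matrices V₁,…,V_m with strictly positive diagonals and a vector y ∈ ℝⁿ. For σ² ∈ ℝ^m with nonnegative entries and Ω(σ²) = Σᵢ σᵢ² Vᵢ positive definite, define the REML log-likelihood L(σ²) = −½ ln det Ω(σ²) − ½ yᵀ Ω(σ²)⁻¹ y, and define the MM map M by (M(σ²))ᵢ = σᵢ²·√( (yᵀΩ(σ²)⁻¹VᵢΩ(σ²)⁻¹y) / tr(Ω(σ²)⁻¹Vᵢ) ), with (M(σ²))ᵢ = 0 when σᵢ² = 0. If both Ω(σ²) and Ω(M(σ²)) are positive definite, then L(M(σ²)) ≥ L(σ²) (the ascent property). -/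
open Matrix

section MMAux

variable {n : ℕ}

open scoped MatrixOrder in
private lemma psd_sqrt_ex {A : Matrix (Fin n) (Fin n) ℝ} (hA : A.PosSemidef) :
    ∃ T : Matrix (Fin n) (Fin n) ℝ, T.PosSemidef ∧ T * T = A :=
  ⟨CFC.sqrt A, (CFC.sqrt_nonneg A).posSemidef, CFC.sqrt_mul_sqrt_self A hA.nonneg⟩

private lemma psd_eq_ct_mul {A : Matrix (Fin n) (Fin n) ℝ} (hA : A.PosSemidef) :
    ∃ S : Matrix (Fin n) (Fin n) ℝ, A = Sᴴ * S := by
  obtain ⟨T, hT, hTT⟩ := psd_sqrt_ex hA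
  exact ⟨T, by rw [hT.1.eq, hTT]⟩

private lemma sum_rot {M N : Type*} [Fintype M] [Fintype N] (f : N → N → M → ℝ) :
    ∑ j, ∑ k, ∑ i, f j k i = ∑ i, ∑ j, ∑ k, f j k i := by
  calc ∑ j, ∑ k, ∑ i, f j k i = ∑ j, ∑ i, ∑ k, f j k i :=
        Finset.sum_congr rfl (fun _ _ => Finset.sum_comm)
    _ = ∑ i, ∑ j, ∑ k, f j k i := Finset.sum_comm

private lemma trace_eq_sum_eigs {A : Matrix (Fin n) (Fin n) ℝ} (hA : A.IsHermitian) :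
    A.trace = ∑ i, hA.eigenvalues i := by
  conv_lhs => rw [hA.spectral_theorem]
  rw [Unitary.conjStarAlgAut_apply, Matrix.trace_mul_cycle]
  rw [show (star (hA.eigenvectorUnitary : Matrix (Fin n) (Fin n) ℝ) *
      (hA.eigenvectorUnitary : Matrix (Fin n) (Fin n) ℝ)) = 1 from
    Unitary.coe_star_mul_self _]
  rw [Matrix.one_mul, Matrix.trace_diagonal]
  simp

private lemma log_det_le_trace {M : Matrix (Fin n) (Fin n) ℝ} (hM : M.PosSemidef)
    (hdet : 0 < M.det) : Real.log M.det ≤ M.trace - n := by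
  have heig : M.det = ∏ i, hM.1.eigenvalues i := by
    rw [hM.1.det_eq_prod_eigenvalues]; norm_num
  have hpos : ∀ i, 0 < hM.1.eigenvalues i := by
    intro i
    rcases lt_or_eq_of_le (hM.eigenvalues_nonneg i) with h | h
    · exact h
    · exfalso
      rw [heig] at hdet
      rw [Finset.prod_eq_zero (Finset.mem_univ i) h.symm] at hdet
      exact lt_irrefl 0 hdet
  rw [heig, Real.log_prod (fun i _ => (hpos i).ne'), trace_eq_sum_eigs hM.1]
  have : ∀ i ∈ Finset.univ, Real.log (hM.1.eigenvalues i) ≤ hM.1.eigenvalues i - 1 :=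
    fun i _ => Real.log_le_sub_one_of_pos (hpos i)
  calc ∑ i, Real.log (hM.1.eigenvalues i) ≤ ∑ i, (hM.1.eigenvalues i - 1) :=
        Finset.sum_le_sum this
    _ = (∑ i, hM.1.eigenvalues i) - n := by
        rw [Finset.sum_sub_distrib]; simp

private lemma log_det_le {A B : Matrix (Fin n) (Fin n) ℝ} (hA : A.PosDef) (hB : B.PosDef) :
    Real.log B.det ≤ Real.log A.det + ((A⁻¹ * B).trace - n) := by
  have hAi : (A⁻¹).PosDef := hA.inv
  obtain ⟨T, hT, hTT⟩ := psd_sqrt_ex hAi.posSemidef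
  have hMpsd : (T * B * T).PosSemidef := by
    have := hB.posSemidef.mul_mul_conjTranspose_same T
    rwa [hT.1.eq] at this
  have hdetA : 0 < A.det := hA.det_pos
  have hdetB : 0 < B.det := hB.det_pos
  have hdetAi : (A⁻¹).det = A.det⁻¹ := by
    rw [Matrix.det_nonsing_inv, Ring.inverse_eq_inv']
  have hdetM : (T * B * T).det = A.det⁻¹ * B.det := by
    have h2 : T.det * T.det = A.det⁻¹ := by rw [← Matrix.det_mul, hTT, hdetAi]
    rw [Matrix.det_mul, Matrix.det_mul, ← h2]; ring
  have hdetMpos : 0 < (T * B * T).det := by rw [hdetM]; positivity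
  have htr : (T * B * T).trace = (A⁻¹ * B).trace := by
    rw [Matrix.trace_mul_cycle, hTT]
  have h := log_det_le_trace hMpsd hdetMpos
  rw [hdetM, htr, Real.log_mul (by positivity) hdetB.ne', Real.log_inv] at h
  linarith

private lemma dot_conj (S : Matrix (Fin n) (Fin n) ℝ) (a b : Fin n → ℝ) :
    a ⬝ᵥ (Sᴴ * S) *ᵥ b = (S *ᵥ a) ⬝ᵥ (S *ᵥ b) := by
  rw [← Matrix.mulVec_mulVec, Matrix.dotProduct_mulVec a, Matrix.vecMul_conjTranspose]
  simp

private lemma psd_cs {V : Matrix (Fin n) (Fin n) ℝ} (hV : V.PosSemidef) (v w : Fin n → ℝ) :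
    (v ⬝ᵥ V *ᵥ w) ^ 2 ≤ (v ⬝ᵥ V *ᵥ v) * (w ⬝ᵥ V *ᵥ w) := by
  obtain ⟨S, rfl⟩ := psd_eq_ct_mul hV
  rw [dot_conj, dot_conj, dot_conj]
  have := Finset.sum_mul_sq_le_sq_mul_sq Finset.univ (S *ᵥ v) (S *ᵥ w)
  simpa [dotProduct, pow_two] using this

private lemma psd_dot_le {V : Matrix (Fin n) (Fin n) ℝ} (hV : V.PosSemidef) (v w : Fin n → ℝ) :
    v ⬝ᵥ V *ᵥ w ≤ Real.sqrt (v ⬝ᵥ V *ᵥ v) * Real.sqrt (w ⬝ᵥ V *ᵥ w) := by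
  have h0v : 0 ≤ v ⬝ᵥ V *ᵥ v := by simpa using hV.dotProduct_mulVec_nonneg v
  calc v ⬝ᵥ V *ᵥ w ≤ |v ⬝ᵥ V *ᵥ w| := le_abs_self _
    _ = Real.sqrt ((v ⬝ᵥ V *ᵥ w) ^ 2) := (Real.sqrt_sq_eq_abs _).symm
    _ ≤ Real.sqrt ((v ⬝ᵥ V *ᵥ v) * (w ⬝ᵥ V *ᵥ w)) := Real.sqrt_le_sqrt (psd_cs hV v w)
    _ = _ := Real.sqrt_mul h0v _

private lemma trace_mul_pos (hn : 0 < n) {B W : Matrix (Fin n) (Fin n) ℝ}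
    (hB : B.PosDef) (hW : W.PosSemidef) (hd : ∀ j, 0 < W j j) : 0 < (B * W).trace := by
  obtain ⟨S, rfl⟩ := psd_eq_ct_mul hW
  have h1 : (B * (Sᴴ * S)).trace = (S * B * Sᴴ).trace := by
    rw [← Matrix.mul_assoc, Matrix.trace_mul_cycle]
  have h2 : ∀ j, (S * B * Sᴴ) j j = (fun k => S j k) ⬝ᵥ B *ᵥ (fun k => S j k) := by
    intro j
    simp only [Matrix.mul_apply, Matrix.conjTranspose_apply, dotProduct, Matrix.mulVec,
      star_trivial, Finset.sum_mul, Finset.mul_sum]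
    rw [Finset.sum_comm]
    apply Finset.sum_congr rfl; intro k _
    apply Finset.sum_congr rfl; intro l _
    ring
  rw [h1, Matrix.trace]
  have j0 : Fin n := ⟨0, hn⟩
  have hdj : 0 < (Sᴴ * S) j0 j0 := hd j0
  have hex : ∃ k, S k j0 ≠ 0 := by
    by_contra h
    push_neg at h
    have : (Sᴴ * S) j0 j0 = 0 := by
      simp [Matrix.mul_apply, Matrix.conjTranspose_apply, h]
    linarith
  obtain ⟨k, hk⟩ := hex
  apply Finset.sum_pos'
  · intro j _
    rw [Matrix.diag_apply, h2 j]
    simpa using hB.posSemidef.dotProduct_mulVec_nonneg (fun l => S j l)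
  · refine ⟨k, Finset.mem_univ k, ?_⟩
    rw [Matrix.diag_apply, h2 k]
    have hne : (fun l => S k l) ≠ 0 := fun h => hk (congrFun h j0)
    simpa using hB.dotProduct_mulVec_pos hne

end MMAux

/-- The covariance matrix `Ω(σ²) = ∑ i, σᵢ² Vᵢ`. -/
noncomputable def covMat {m n : ℕ} (V : Fin m → Matrix (Fin n) (Fin n) ℝ)
    (s : Fin m → ℝ) : Matrix (Fin n) (Fin n) ℝ :=
  ∑ i, s i • V i

/-- The REML log-likelihood `L(σ²) = −½ ln det Ω(σ²) − ½ yᵀ Ω(σ²)⁻¹ y`. -/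
noncomputable def remlLogLik {m n : ℕ} (V : Fin m → Matrix (Fin n) (Fin n) ℝ)
    (y : Fin n → ℝ) (s : Fin m → ℝ) : ℝ :=
  -(1 / 2 : ℝ) * Real.log (covMat V s).det -
    (1 / 2 : ℝ) * (y ⬝ᵥ (covMat V s)⁻¹ *ᵥ y)

/-- The MM map `(M(σ²))ᵢ = σᵢ² √( (yᵀΩ⁻¹VᵢΩ⁻¹y) / tr(Ω⁻¹Vᵢ) )` (which is `0` whenever
`σᵢ² = 0`). -/
noncomputable def mmMap {m n : ℕ} (V : Fin m → Matrix (Fin n) (Fin n) ℝ)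
    (y : Fin n → ℝ) (s : Fin m → ℝ) : Fin m → ℝ := fun i =>
  s i * Real.sqrt ((y ⬝ᵥ ((covMat V s)⁻¹ * V i * (covMat V s)⁻¹) *ᵥ y) /
    ((covMat V s)⁻¹ * V i).trace)

section MMAux2

variable {m n : ℕ}

private lemma dot_cov (V : Fin m → Matrix (Fin n) (Fin n) ℝ) (c : Fin m → ℝ)
    (x z : Fin n → ℝ) :
    x ⬝ᵥ (covMat V c) *ᵥ z = ∑ i, c i * (x ⬝ᵥ V i *ᵥ z) := by
  simp only [covMat, dotProduct, mulVec, Matrix.sum_apply, Matrix.smul_apply, smul_eq_mul,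
    Finset.sum_mul, Finset.mul_sum]
  rw [sum_rot]
  apply Finset.sum_congr rfl; intro i _
  apply Finset.sum_congr rfl; intro j _
  apply Finset.sum_congr rfl; intro k _
  ring

private lemma trace_cov (V : Fin m → Matrix (Fin n) (Fin n) ℝ) (c : Fin m → ℝ)
    (A : Matrix (Fin n) (Fin n) ℝ) :
    (A * covMat V c).trace = ∑ i, c i * (A * V i).trace := by
  simp [covMat, Matrix.mul_sum, Matrix.trace_sum, Matrix.mul_smul, Matrix.trace_smul,
    smul_eq_mul]

end MMAux2

/-- the ascent property of the MM algorithm: `L(M(σ²)) ≥ L(σ²)`. -/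
theorem mm_ascent (m n : ℕ) (V : Fin m → Matrix (Fin n) (Fin n) ℝ)
    (hV : ∀ i, (V i).PosSemidef) (hVdiag : ∀ i j, 0 < V i j j)
    (y : Fin n → ℝ) (s : Fin m → ℝ) (hs : ∀ i, 0 ≤ s i)
    (hΩ : (covMat V s).PosDef) (hΩ' : (covMat V (mmMap V y s)).PosDef) :
    remlLogLik V y s ≤ remlLogLik V y (mmMap V y s) := by
  rcases Nat.eq_zero_or_pos n with hn | hn
  · subst hn
    simp [remlLogLik, covMat, dotProduct]
  -- notation
  have hAiPD : ((covMat V s)⁻¹).PosDef := hΩ.inv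
  have hAiT : ((covMat V s)⁻¹)ᵀ = (covMat V s)⁻¹ := by
    rw [← Matrix.conjTranspose_eq_transpose_of_trivial]
    exact hAiPD.1.eq
  have hAunit : IsUnit (covMat V s).det := isUnit_iff_ne_zero.mpr hΩ.det_pos.ne'
  set A := covMat V s with hAdef
  set w : Fin n → ℝ := A⁻¹ *ᵥ y with hwdef
  set q : Fin m → ℝ := fun i => w ⬝ᵥ V i *ᵥ w with hqdef
  set r : Fin m → ℝ := fun i => (A⁻¹ * V i).trace with hrdef
  have hq0 : ∀ i, 0 ≤ q i := fun i => by simpa using (hV i).dotProduct_mulVec_nonneg w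
  have hr0 : ∀ i, 0 < r i := fun i => trace_mul_pos hn hAiPD (hV i) (fun j => hVdiag i j)
  have hAw : A *ᵥ w = y := by
    rw [hwdef, Matrix.mulVec_mulVec, Matrix.mul_nonsing_inv _ hAunit, Matrix.one_mulVec]
  -- mmMap in terms of q and r
  have hql : ∀ i, y ⬝ᵥ (A⁻¹ * V i * A⁻¹) *ᵥ y = q i := by
    intro i
    rw [← Matrix.mulVec_mulVec, ← Matrix.mulVec_mulVec, Matrix.dotProduct_mulVec y,
      ← Matrix.mulVec_transpose, hAiT]
  have hts : ∀ i, mmMap V y s i = s i * Real.sqrt (q i / r i) := by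
    intro i
    rw [mmMap, ← hAdef, hql i]
  set t := mmMap V y s with htdef
  set B := covMat V t with hBdef
  have hBunit : IsUnit B.det := isUnit_iff_ne_zero.mpr hΩ'.det_pos.ne'
  set v : Fin n → ℝ := B⁻¹ *ᵥ y with hvdef
  have hBv : B *ᵥ v = y := by
    rw [hvdef, Matrix.mulVec_mulVec, Matrix.mul_nonsing_inv _ hBunit, Matrix.one_mulVec]
  -- the three sums
  have hsr : ∑ i, s i * r i = (n : ℝ) := by
    have h1 : A⁻¹ * A = 1 := Matrix.nonsing_inv_mul _ hAunit
    calc ∑ i, s i * r i = (A⁻¹ * covMat V s).trace := (trace_cov V s A⁻¹).symm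
      _ = (1 : Matrix (Fin n) (Fin n) ℝ).trace := by rw [← hAdef, h1]
      _ = (n : ℝ) := by rw [Matrix.trace_one]; simp
  have htr_eq : ∑ i, t i * r i = ∑ i, s i * Real.sqrt (q i * r i) := by
    apply Finset.sum_congr rfl
    intro i _
    rw [hts i, Real.sqrt_div (hq0 i), Real.sqrt_mul (hq0 i)]
    have hrne : Real.sqrt (r i) ≠ 0 := (Real.sqrt_pos.mpr (hr0 i)).ne'
    field_simp
    linear_combination (-(s i * Real.sqrt (q i))) * Real.mul_self_sqrt (hr0 i).le
  have hyA : y ⬝ᵥ A⁻¹ *ᵥ y = ∑ i, s i * q i := by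
    calc y ⬝ᵥ A⁻¹ *ᵥ y = (A⁻¹ *ᵥ y) ⬝ᵥ y := dotProduct_comm _ _
      _ = w ⬝ᵥ y := by rw [← hwdef]
      _ = w ⬝ᵥ A *ᵥ w := by rw [hAw]
      _ = ∑ i, s i * q i := by rw [hAdef, dot_cov]
  -- logdet inequality
  have hld : Real.log B.det ≤
      Real.log A.det + (∑ i, s i * Real.sqrt (q i * r i) - ∑ i, s i * r i) := by
    have h := log_det_le hΩ hΩ'
    have h2 : (A⁻¹ * B).trace = ∑ i, t i * r i := by
      simp only [hBdef, trace_cov, hrdef]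
    rw [h2, htr_eq] at h
    rw [hsr]
    exact h
  -- quadratic inequality
  have hquad : y ⬝ᵥ B⁻¹ *ᵥ y ≤ ∑ i, s i * Real.sqrt (q i * r i) := by
    have e0 : y ⬝ᵥ B⁻¹ *ᵥ y = v ⬝ᵥ y := by
      calc y ⬝ᵥ B⁻¹ *ᵥ y = (B⁻¹ *ᵥ y) ⬝ᵥ y := dotProduct_comm _ _
        _ = v ⬝ᵥ y := by rw [← hvdef]
    have e1 : v ⬝ᵥ B *ᵥ v = v ⬝ᵥ y := by rw [hBv]
    have e2 : v ⬝ᵥ y = ∑ i, s i * (v ⬝ᵥ V i *ᵥ w) := by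
      rw [← hAw, hAdef, dot_cov]
    have e3 : v ⬝ᵥ B *ᵥ v = ∑ i, t i * (v ⬝ᵥ V i *ᵥ v) := by
      rw [hBdef, dot_cov]
    have e4 : y ⬝ᵥ B⁻¹ *ᵥ y =
        ∑ i, (2 * (s i * (v ⬝ᵥ V i *ᵥ w)) - t i * (v ⬝ᵥ V i *ᵥ v)) := by
      rw [Finset.sum_sub_distrib]
      have : ∑ i, 2 * (s i * (v ⬝ᵥ V i *ᵥ w)) = 2 * ∑ i, s i * (v ⬝ᵥ V i *ᵥ w) := by
        rw [Finset.mul_sum]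
      rw [this, ← e2, ← e3, e0, e1]
      ring
    rw [e4]
    apply Finset.sum_le_sum
    intro i _
    -- per-term bound
    have hp0 : 0 ≤ v ⬝ᵥ V i *ᵥ v := by simpa using (hV i).dotProduct_mulVec_nonneg v
    have hcle : v ⬝ᵥ V i *ᵥ w ≤ Real.sqrt (v ⬝ᵥ V i *ᵥ v) * Real.sqrt (q i) :=
      psd_dot_le (hV i) v w
    set p := v ⬝ᵥ V i *ᵥ v with hpdef
    set c := v ⬝ᵥ V i *ᵥ w with hcdef
    set a := Real.sqrt p with hadef
    set b := Real.sqrt (q i) with hbdef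
    set d := Real.sqrt (r i) with hddef
    have ha0 : 0 ≤ a := Real.sqrt_nonneg _
    have hb0 : 0 ≤ b := Real.sqrt_nonneg _
    have hdpos : 0 < d := Real.sqrt_pos.mpr (hr0 i)
    have ha2 : a ^ 2 = p := Real.sq_sqrt hp0
    have hb2 : b ^ 2 = q i := Real.sq_sqrt (hq0 i)
    have hd2 : d ^ 2 = r i := Real.sq_sqrt (hr0 i).le
    have hsqrtdiv : Real.sqrt (q i / r i) = b / d := Real.sqrt_div (hq0 i) _
    have hsqrtmul : Real.sqrt (q i * r i) = b * d := Real.sqrt_mul (hq0 i) _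
    rw [hts i, hsqrtdiv, hsqrtmul]
    have key : 2 * c * d ≤ b * p + b * d ^ 2 := by
      have h1 : c * (2 * d) ≤ a * b * (2 * d) :=
        mul_le_mul_of_nonneg_right hcle (by positivity)
      nlinarith [mul_nonneg hb0 (sq_nonneg (a - d))]
    have hkey2 : s i * (2 * c * d) ≤ s i * (b * p + b * d ^ 2) :=
      mul_le_mul_of_nonneg_left key (hs i)
    have hdne : d ≠ 0 := hdpos.ne'
    have expand : s i * (b * d) - (2 * (s i * c) - s i * (b / d) * p) =
        (s i * (b * p + b * d ^ 2) - s i * (2 * c * d)) / d := by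
      field_simp
      ring
    have hnn : 0 ≤ (s i * (b * p + b * d ^ 2) - s i * (2 * c * d)) / d :=
      div_nonneg (by linarith) hdpos.le
    linarith [expand ▸ hnn]
  -- AM-GM inequality
  have hamgm : ∑ i, 2 * (s i * Real.sqrt (q i * r i)) ≤ ∑ i, (s i * q i + s i * r i) := by
    apply Finset.sum_le_sum
    intro i _
    have h1 : 2 * Real.sqrt (q i) * Real.sqrt (r i) ≤ q i + r i := by
      nlinarith [sq_nonneg (Real.sqrt (q i) - Real.sqrt (r i)), Real.sq_sqrt (hq0 i),
        Real.sq_sqrt (hr0 i).le]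
    rw [Real.sqrt_mul (hq0 i)]
    nlinarith [mul_le_mul_of_nonneg_left h1 (hs i)]
  rw [Finset.sum_add_distrib, ← Finset.mul_sum] at hamgm
  -- conclude
  rw [remlLogLik, remlLogLik, ← hAdef, ← hBdef, hyA]
  linarith [hld, hquad, hamgm]
end

section
/- Let V₁,…,V_m be real n×n symmetric positive semidefinite matrices with V₁ positive definite and V₂,…,V_m nonzero. Let ℋ ⊆ ℝⁿ be the subspace spanned by the union of the column spaces of V₂,…,V_m, assume dim ℋ = q < n, and let y ∈ ℝⁿ with y ∉ ℋ. For σ² ∈ ℝ^m with nonnegative entries such that Ω(σ²) = Σᵢ σᵢ² Vᵢ is positive definite, set L(σ²) = −½ ln det Ω(σ²) − ½ yᵀ Ω(σ²)⁻¹ y. Then for every c ∈ ℝ, the super-level set S_c = { σ² ∈ ℝ^m : σᵢ² ≥ 0 for all i, Ω(σ²) positive definite, L(σ²) ≥ c } is compact. -/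
open Matrix

/-- The subspace `ℋ` spanned by the union of the column spaces of `V i`, `i ≠ 0`. -/
noncomputable def spanH {m n : ℕ} (V : Fin (m + 1) → Matrix (Fin n) (Fin n) ℝ) :
    Submodule ℝ (Fin n → ℝ) :=
  ⨆ i : {i : Fin (m + 1) // i ≠ 0}, LinearMap.range (V i.1).mulVecLin


variable {n : ℕ}

lemma myPosSemidef_smul {M : Matrix (Fin n) (Fin n) ℝ} (hM : M.PosSemidef) {c : ℝ} (hc : 0 ≤ c) :
    (c • M).PosSemidef := by
  refine Matrix.PosSemidef.of_dotProduct_mulVec_nonneg ?_ fun x => ?_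
  · unfold Matrix.IsHermitian
    rw [conjTranspose_smul, hM.1]
    simp
  · rw [smul_mulVec, dotProduct_smul, smul_eq_mul]
    exact mul_nonneg hc (hM.dotProduct_mulVec_nonneg x)

lemma myPosSemidef_sum {ι : Type*} (t : Finset ι) (f : ι → Matrix (Fin n) (Fin n) ℝ)
    (h : ∀ i ∈ t, (f i).PosSemidef) : (∑ i ∈ t, f i).PosSemidef := by
  classical
  induction t using Finset.induction_on with
  | empty => simpa using Matrix.PosSemidef.zero
  | insert _ _ hx ih =>
    rw [Finset.sum_insert hx]
    exact ((h _ (Finset.mem_insert_self _ _)).add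
      (ih fun i hi => h i (Finset.mem_insert_of_mem hi)))

lemma myPosDef_smul {M : Matrix (Fin n) (Fin n) ℝ} (hM : M.PosDef) {c : ℝ} (hc : 0 < c) :
    (c • M).PosDef := by
  refine Matrix.PosDef.of_dotProduct_mulVec_pos ?_ fun x hx => ?_
  · unfold Matrix.IsHermitian
    rw [conjTranspose_smul, hM.1]; simp
  · rw [smul_mulVec, dotProduct_smul, smul_eq_mul]
    exact mul_pos hc (hM.dotProduct_mulVec_pos hx)

lemma sym_dot {M : Matrix (Fin n) (Fin n) ℝ} (hM : M.IsHermitian) (u v : Fin n → ℝ) :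
    u ⬝ᵥ M *ᵥ v = v ⬝ᵥ M *ᵥ u := by
  have hMt : Mᵀ = M := by
    have := hM.eq
    rwa [conjTranspose_eq_transpose_of_trivial] at this
  rw [dotProduct_mulVec, ← hMt, vecMul_transpose, hMt, dotProduct_comm]


variable {n : ℕ}

lemma dot_eq_inner (x y : EuclideanSpace ℝ (Fin n)) :
    (inner ℝ x y : ℝ) = (⇑x : Fin n → ℝ) ⬝ᵥ ⇑y := by
  simp [PiLp.inner_apply, dotProduct, RCLike.inner_apply, mul_comm]

lemma myEig_ge {M : Matrix (Fin n) (Fin n) ℝ} (hM : M.IsHermitian) {b : ℝ}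
    (h : ∀ x : Fin n → ℝ, b * (x ⬝ᵥ x) ≤ x ⬝ᵥ M *ᵥ x) (j : Fin n) :
    b ≤ hM.eigenvalues j := by
  have hv := hM.mulVec_eigenvectorBasis j
  set v : Fin n → ℝ := ⇑(hM.eigenvectorBasis j) with hvdef
  have hvv : v ⬝ᵥ v = 1 := by
    have h1 : ‖hM.eigenvectorBasis j‖ = 1 := hM.eigenvectorBasis.orthonormal.1 j
    have h2 : (inner ℝ (hM.eigenvectorBasis j) (hM.eigenvectorBasis j) : ℝ) = 1 := by
      rw [real_inner_self_eq_norm_sq, h1]; norm_num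
    rw [dot_eq_inner] at h2
    exact h2
  have := h v
  rw [hv, dotProduct_smul, hvv, smul_eq_mul, mul_one, mul_one] at this
  exact this

lemma myTrace_eq_sum {M : Matrix (Fin n) (Fin n) ℝ} (hM : M.IsHermitian) :
    M.trace = ∑ j, hM.eigenvalues j := by
  conv_lhs => rw [hM.spectral_theorem, Unitary.conjStarAlgAut_apply]
  rw [Matrix.trace_mul_cycle]
  rw [show (star (hM.eigenvectorUnitary : Matrix (Fin n) (Fin n) ℝ)) *
      (hM.eigenvectorUnitary : Matrix (Fin n) (Fin n) ℝ) = 1 from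
    Unitary.coe_star_mul_self _]
  simp [Matrix.trace_diagonal]

lemma mySub_smul_one_psd {M : Matrix (Fin n) (Fin n) ℝ} (hM : M.IsHermitian) {c : ℝ}
    (hc : ∀ j, c ≤ hM.eigenvalues j) : (M - c • 1).PosSemidef := by
  have hU : (hM.eigenvectorUnitary : Matrix (Fin n) (Fin n) ℝ) *
      (star (hM.eigenvectorUnitary : Matrix (Fin n) (Fin n) ℝ)) = 1 :=
    Unitary.coe_mul_star_self _
  have key : M - c • 1 = (hM.eigenvectorUnitary : Matrix (Fin n) (Fin n) ℝ) *
      (diagonal (fun j => hM.eigenvalues j - c)) *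
      (hM.eigenvectorUnitary : Matrix (Fin n) (Fin n) ℝ)ᴴ := by
    rw [← Matrix.star_eq_conjTranspose]
    conv_lhs => rw [hM.spectral_theorem, Unitary.conjStarAlgAut_apply]
    have : (diagonal (fun j => hM.eigenvalues j - c)) =
        diagonal (RCLike.ofReal ∘ hM.eigenvalues) - c • 1 := by
      simp [Matrix.smul_one_eq_diagonal, Matrix.diagonal_sub, Function.comp]
    rw [this, Matrix.mul_sub, Matrix.sub_mul, Matrix.mul_smul, Matrix.mul_one,
      Matrix.smul_mul, hU]
  rw [key]
  exact (Matrix.PosSemidef.diagonal (fun j => sub_nonneg.2 (hc j))).mul_mul_conjTranspose_same _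

lemma quad_ge_of_psd_sub {M : Matrix (Fin n) (Fin n) ℝ} {c : ℝ}
    (h : (M - c • 1).PosSemidef) (x : Fin n → ℝ) : c * (x ⬝ᵥ x) ≤ x ⬝ᵥ M *ᵥ x := by
  have := h.dotProduct_mulVec_nonneg x
  rw [star_trivial, sub_mulVec, dotProduct_sub, smul_mulVec, one_mulVec,
    dotProduct_smul, smul_eq_mul] at this
  linarith


variable {n : ℕ}

lemma myDet_eq_prod {M : Matrix (Fin n) (Fin n) ℝ} (hM : M.IsHermitian) :
    M.det = ∏ j, hM.eigenvalues j := by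
  simpa using hM.det_eq_prod_eigenvalues

lemma myDet_ge_pow {M : Matrix (Fin n) (Fin n) ℝ} (hM : M.IsHermitian) {b : ℝ} (hb : 0 ≤ b)
    (h : ∀ x : Fin n → ℝ, b * (x ⬝ᵥ x) ≤ x ⬝ᵥ M *ᵥ x) : b ^ n ≤ M.det := by
  rw [myDet_eq_prod hM]
  calc b ^ n = ∏ _j : Fin n, b := by simp
  _ ≤ ∏ j, hM.eigenvalues j := by
      apply Finset.prod_le_prod (fun _ _ => hb)
      intro j _
      exact myEig_ge hM h j

lemma myDet_ge_trace {M : Matrix (Fin n) (Fin n) ℝ} (hM : M.IsHermitian) {b : ℝ} (hb : 0 < b)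
    (hn : 0 < n)
    (h : ∀ x : Fin n → ℝ, b * (x ⬝ᵥ x) ≤ x ⬝ᵥ M *ᵥ x) :
    b ^ (n - 1) * (M.trace / n) ≤ M.det := by
  have heig : ∀ j, b ≤ hM.eigenvalues j := myEig_ge hM h
  have : Nonempty (Fin n) := Fin.pos_iff_nonempty.mp hn
  -- exists j with trace/n ≤ eigenvalue j
  obtain ⟨j₀, hj₀⟩ : ∃ j : Fin n, M.trace / n ≤ hM.eigenvalues j := by
    by_contra hcon
    push_neg at hcon
    have hlt : ∑ j, hM.eigenvalues j < ∑ _j : Fin n, (M.trace / n) :=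
      Finset.sum_lt_sum_of_nonempty Finset.univ_nonempty (fun j _ => hcon j)
    rw [← myTrace_eq_sum hM, Finset.sum_const, Finset.card_univ, Fintype.card_fin,
      nsmul_eq_mul, mul_div_cancel₀ _ (by positivity : (n:ℝ) ≠ 0)] at hlt
    exact lt_irrefl _ hlt
  rw [myDet_eq_prod hM, ← Finset.mul_prod_erase Finset.univ _ (Finset.mem_univ j₀)]
  have hprod : b ^ (n - 1) ≤ ∏ j ∈ Finset.univ.erase j₀, hM.eigenvalues j := by
    calc b ^ (n-1) = ∏ _j ∈ Finset.univ.erase j₀, b := by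
          rw [Finset.prod_const, Finset.card_erase_of_mem (Finset.mem_univ _),
            Finset.card_univ, Fintype.card_fin]
    _ ≤ _ := Finset.prod_le_prod (fun _ _ => hb.le) (fun j _ => heig j)
  have htr : 0 ≤ M.trace / n := by
    apply div_nonneg _ (by positivity)
    rw [myTrace_eq_sum hM]
    exact Finset.sum_nonneg fun j _ => le_trans hb.le (heig j)
  have hprod0 : (0:ℝ) ≤ ∏ j ∈ Finset.univ.erase j₀, hM.eigenvalues j :=
    le_trans (by positivity) hprod
  calc b ^ (n-1) * (M.trace / n)
      ≤ (∏ j ∈ Finset.univ.erase j₀, hM.eigenvalues j) * hM.eigenvalues j₀ :=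
        mul_le_mul hprod hj₀ htr hprod0
  _ = _ := mul_comm _ _

section helpers
variable {m n : ℕ} (V : Fin (m+1) → Matrix (Fin n) (Fin n) ℝ)

lemma covMat_quad (s : Fin (m+1) → ℝ) (x : Fin n → ℝ) :
    x ⬝ᵥ covMat V s *ᵥ x = ∑ i, s i * (x ⬝ᵥ V i *ᵥ x) := by
  unfold covMat
  have : (∑ i, s i • V i) *ᵥ x = ∑ i, (s i • V i) *ᵥ x := by
    ext j
    simp [Matrix.mulVec, dotProduct, Finset.sum_apply, Matrix.sum_apply, Finset.sum_mul,
      Finset.mul_sum]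
    rw [Finset.sum_comm]
  rw [this]
  have h2 : x ⬝ᵥ (∑ i, ((s i • V i) *ᵥ x)) = ∑ i, x ⬝ᵥ ((s i • V i) *ᵥ x) := by
    simp only [dotProduct, Finset.sum_apply, Finset.mul_sum]
    rw [Finset.sum_comm]
  rw [h2]
  congr 1; ext i
  rw [smul_mulVec, dotProduct_smul, smul_eq_mul]

lemma covMat_herm (hV : ∀ i, (V i).PosSemidef) (s : Fin (m+1) → ℝ) :
    (covMat V s).IsHermitian := by
  unfold Matrix.IsHermitian covMat
  rw [conjTranspose_sum]
  congr 1; ext i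
  rw [conjTranspose_smul, (hV i).1.eq]; simp

lemma covMat_posSemidef (hV : ∀ i, (V i).PosSemidef) {s : Fin (m+1) → ℝ}
    (hs : ∀ i, 0 ≤ s i) : (covMat V s).PosSemidef :=
  myPosSemidef_sum _ _ fun i _ => myPosSemidef_smul (hV i) (hs i)

lemma covMat_posDef (hV : ∀ i, (V i).PosSemidef) (hV0 : (V 0).PosDef) {s : Fin (m+1) → ℝ}
    (hs : ∀ i, 0 ≤ s i) (hs0 : 0 < s 0) : (covMat V s).PosDef := by
  have : covMat V s = s 0 • V 0 + ∑ i : Fin m, s i.succ • V i.succ := by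
    unfold covMat; rw [Fin.sum_univ_succ]
  rw [this]
  exact (myPosDef_smul hV0 hs0).add_posSemidef
    (myPosSemidef_sum _ _ fun i _ => myPosSemidef_smul (hV i.succ) (hs i.succ))

lemma covMat_trace (s : Fin (m+1) → ℝ) :
    (covMat V s).trace = ∑ i, s i * (V i).trace := by
  unfold covMat
  rw [Matrix.trace_sum]
  congr 1; ext i
  rw [Matrix.trace_smul, smul_eq_mul]

-- trace of PSD nonzero matrix positive
lemma trace_nonneg_of_psd {M : Matrix (Fin n) (Fin n) ℝ} (hM : M.PosSemidef) :
    0 ≤ M.trace := by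
  rw [Matrix.trace]
  apply Finset.sum_nonneg
  intro j _
  have := hM.dotProduct_mulVec_nonneg (Pi.single j 1)
  rw [star_trivial] at this
  simpa [Matrix.mulVec_single, single_dotProduct] using this

lemma trace_pos_of_psd_ne {M : Matrix (Fin n) (Fin n) ℝ} (hM : M.PosSemidef) (hMne : M ≠ 0) :
    0 < M.trace := by
  rcases lt_or_eq_of_le (trace_nonneg_of_psd hM) with h | h
  · exact h
  exfalso
  apply hMne
  -- all diagonal entries are ≥ 0 and sum to 0, hence 0; then M *ᵥ single = 0
  have hdiag : ∀ j, M.diag j = 0 := by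
    have hnn : ∀ j ∈ Finset.univ, 0 ≤ M.diag j := by
      intro j _
      have := hM.dotProduct_mulVec_nonneg (Pi.single j 1)
      rw [star_trivial] at this
      simpa [Matrix.mulVec_single, single_dotProduct, Matrix.diag] using this
    intro j
    have := (Finset.sum_eq_zero_iff_of_nonneg hnn).mp h.symm j (Finset.mem_univ j)
    exact this
  have hcol : ∀ j, M *ᵥ Pi.single j 1 = 0 := by
    intro j
    apply (hM.dotProduct_mulVec_zero_iff (Pi.single j 1)).mp
    rw [star_trivial]
    have := hdiag j
    simpa [Matrix.mulVec_single, single_dotProduct, Matrix.diag] using this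
  ext i j
  have := congr_fun (hcol j) i
  simpa [Matrix.mulVec_single] using this

end helpers

-- Cauchy-Schwarz for PSD forms
lemma cs_psd {n : ℕ} {Ω : Matrix (Fin n) (Fin n) ℝ} (hΩ : Ω.PosSemidef) (w z : Fin n → ℝ) :
    (w ⬝ᵥ Ω *ᵥ z) ^ 2 ≤ (w ⬝ᵥ Ω *ᵥ w) * (z ⬝ᵥ Ω *ᵥ z) := by
  have key : ∀ t : ℝ, 0 ≤ (z ⬝ᵥ Ω *ᵥ z) * (t * t) + (2 * (w ⬝ᵥ Ω *ᵥ z)) * t + (w ⬝ᵥ Ω *ᵥ w) := by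
    intro t
    have h0 := hΩ.dotProduct_mulVec_nonneg (w + t • z)
    rw [star_trivial, mulVec_add, mulVec_smul, dotProduct_add, add_dotProduct,
      add_dotProduct, dotProduct_smul, smul_dotProduct, smul_dotProduct,
      dotProduct_smul] at h0
    have hsym : z ⬝ᵥ Ω *ᵥ w = w ⬝ᵥ Ω *ᵥ z := sym_dot hΩ.1 z w
    simp only [smul_eq_mul] at h0
    rw [hsym] at h0
    nlinarith [h0]
  have hd := discrim_le_zero key
  rw [discrim] at hd
  nlinarith [hd]

-- needs defs from t5
section wexist
variable {m n : ℕ}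

lemma exists_w (V : Fin (m+1) → Matrix (Fin n) (Fin n) ℝ) (y : Fin n → ℝ)
    (hy : y ∉ spanH V) :
    ∃ w : Fin n → ℝ, (∀ v ∈ spanH V, w ⬝ᵥ v = 0) ∧ w ⬝ᵥ y ≠ 0 := by
  classical
  set e := WithLp.linearEquiv 2 ℝ (Fin n → ℝ)
  set He : Submodule ℝ (EuclideanSpace ℝ (Fin n)) := (spanH V).comap e.toLinearMap with hHe
  have hyHe : (e.symm y) ∉ He := by
    simp only [hHe, Submodule.mem_comap]
    simpa using hy
  rw [← Submodule.orthogonal_orthogonal He] at hyHe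
  rw [Submodule.mem_orthogonal] at hyHe
  push_neg at hyHe
  obtain ⟨u, huH, huy⟩ := hyHe
  have he : ∀ (a : WithLp 2 (Fin n → ℝ)) (x : Fin n), e a x = a x := fun _ _ => rfl
  have hes : ∀ (a : Fin n → ℝ) (x : Fin n), e.symm a x = a x := fun _ _ => rfl
  refine ⟨e u, fun v hv => ?_, ?_⟩
  · have := (Submodule.mem_orthogonal He u).mp huH (e.symm v) (by simpa [hHe])
    rw [← this]
    simp only [PiLp.inner_apply, RCLike.inner_apply, conj_trivial, dotProduct]
    simp only [he, hes, mul_comm]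
  · intro h0
    apply huy
    rw [show (inner ℝ u (e.symm y) : ℝ) = (e u) ⬝ᵥ y from by
      simp only [PiLp.inner_apply, RCLike.inner_apply, conj_trivial, dotProduct]
      simp only [he, hes, mul_comm], h0]

lemma mem_spanH (V : Fin (m+1) → Matrix (Fin n) (Fin n) ℝ) {i : Fin (m+1)} (hi : i ≠ 0)
    (x : Fin n → ℝ) : V i *ᵥ x ∈ spanH V := by
  have : V i *ᵥ x ∈ LinearMap.range (V i).mulVecLin := ⟨x, rfl⟩
  exact (le_iSup (fun j : {j : Fin (m+1) // j ≠ 0} => LinearMap.range (V j.1).mulVecLin)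
    ⟨i, hi⟩) this

end wexist

-- continuity and asymptotic lemmas
section cont
variable {m n : ℕ}

lemma reml_eq_adj (V : Fin (m+1) → Matrix (Fin n) (Fin n) ℝ) (y : Fin n → ℝ)
    (s : Fin (m+1) → ℝ) :
    remlLogLik V y s = -(1/2 : ℝ) * Real.log (covMat V s).det -
      (1/2 : ℝ) * (((covMat V s).det)⁻¹ * (y ⬝ᵥ (covMat V s).adjugate *ᵥ y)) := by
  unfold remlLogLik
  congr 1
  rw [Matrix.inv_def, Ring.inverse_eq_inv', smul_mulVec, dotProduct_smul, smul_eq_mul]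

lemma cont_covMat (V : Fin (m+1) → Matrix (Fin n) (Fin n) ℝ) :
    Continuous fun s : Fin (m+1) → ℝ => covMat V s := by
  unfold covMat
  exact continuous_finset_sum _ fun i _ => (continuous_apply i).smul continuous_const

lemma cont_reml_comp (V : Fin (m+1) → Matrix (Fin n) (Fin n) ℝ) (y : Fin n → ℝ)
    {f : (Fin (m+1) → ℝ) → (Fin (m+1) → ℝ)} (hf : Continuous f)
    (hne : ∀ s, (covMat V (f s)).det ≠ 0) :
    Continuous fun s => remlLogLik V y (f s) := by
  have hcov : Continuous fun s => covMat V (f s) := (cont_covMat V).comp hf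
  have hdet : Continuous fun s => (covMat V (f s)).det := hcov.matrix_det
  have hlog : Continuous fun s => Real.log (covMat V (f s)).det := hdet.log hne
  have hinv : Continuous fun s => ((covMat V (f s)).det)⁻¹ := hdet.inv₀ hne
  have hquad : Continuous fun s => y ⬝ᵥ (covMat V (f s)).adjugate *ᵥ y :=
    (continuous_const.dotProduct (hcov.matrix_adjugate.matrix_mulVec continuous_const))
  have : (fun s => remlLogLik V y (f s)) = fun s =>
      -(1/2 : ℝ) * Real.log (covMat V (f s)).det -
      (1/2 : ℝ) * (((covMat V (f s)).det)⁻¹ * (y ⬝ᵥ (covMat V (f s)).adjugate *ᵥ y)) := by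
    ext s; exact reml_eq_adj V y (f s)
  rw [this]
  exact ((continuous_const.mul hlog).sub (continuous_const.mul (hinv.mul hquad)))

end cont

section asymp
open Filter

lemma tendsto_f_atTop (n : ℕ) (hn : 0 < n) (lam0 K : ℝ) (hlam0 : 0 < lam0) (hK : 0 < K) :
    Tendsto (fun t : ℝ => -((n:ℝ)/2) * Real.log (t * lam0) - K / t) atTop atBot := by
  have h2 : Tendsto (fun t : ℝ => Real.log (t * lam0)) atTop atTop :=
    Real.tendsto_log_atTop.comp (Tendsto.atTop_mul_const hlam0 tendsto_id)
  have hneg : -((n:ℝ)/2) < 0 := by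
    have : (0:ℝ) < (n:ℝ)/2 := by positivity
    linarith
  have hg : Tendsto (fun t : ℝ => -((n:ℝ)/2) * Real.log (t * lam0)) atTop atBot :=
    (tendsto_const_mul_atBot_iff_neg h2).mpr hneg
  apply tendsto_atBot_mono' atTop _ hg
  filter_upwards [eventually_ge_atTop (1:ℝ)] with t ht
  have : 0 ≤ K / t := div_nonneg hK.le (by linarith)
  linarith

lemma tendsto_f_inv_atTop (n : ℕ) (hn : 0 < n) (lam0 K : ℝ) (hlam0 : 0 < lam0) (hK : 0 < K) :
    Tendsto (fun u : ℝ => -((n:ℝ)/2) * Real.log (u⁻¹ * lam0) - K / u⁻¹) atTop atBot := by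
  have heq : (fun u : ℝ => -((n:ℝ)/2) * Real.log (u⁻¹ * lam0) - K / u⁻¹)
      =ᶠ[atTop] fun u => (u * (((n:ℝ)/2) * (Real.log u / u) - K)) - ((n:ℝ)/2) * Real.log lam0 := by
    filter_upwards [eventually_gt_atTop (0:ℝ)] with u hu
    rw [Real.log_mul (by positivity) hlam0.ne', Real.log_inv]
    field_simp
    ring
  rw [tendsto_congr' heq]
  apply Filter.Tendsto.atBot_add (C := -((n:ℝ)/2) * Real.log lam0)
  · have hdiv : Tendsto (fun u : ℝ => Real.log u / u) atTop (nhds 0) := by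
      simpa [Function.comp] using
        Real.isLittleO_log_id_atTop.tendsto_div_nhds_zero
    have hin : Tendsto (fun u : ℝ => ((n:ℝ)/2) * (Real.log u / u) - K) atTop (nhds (-K)) := by
      have := (hdiv.const_mul ((n:ℝ)/2)).sub_const K
      simpa using this
    exact Filter.Tendsto.atTop_mul_neg (by linarith) tendsto_id hin
  · have h := tendsto_const_nhds (x := -((n:ℝ)/2) * Real.log lam0) (f := atTop (α := ℝ))
    simpa [neg_mul] using h
end asymp

open Filter

/-- coerciveness under Assumption 2: `V 0` is positive definite, the
remaining `Vᵢ` are nonzero positive semidefinite, the span `ℋ` of their column spaces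
has dimension `q < n`, and `y ∉ ℋ`.  Then every super-level set of the REML
log-likelihood is compact. -/
theorem superlevel_sets_compact_span (m n : ℕ)
    (V : Fin (m + 1) → Matrix (Fin n) (Fin n) ℝ)
    (hV : ∀ i, (V i).PosSemidef) (hV0 : (V 0).PosDef)
    (hVne : ∀ i, i ≠ 0 → V i ≠ 0) (q : ℕ)
    (hq : Module.finrank ℝ (spanH V) = q)
    (hqn : q < n) (y : Fin n → ℝ) (hy : y ∉ spanH V) (c : ℝ) :
    IsCompact {s : Fin (m + 1) → ℝ |
      (∀ i, 0 ≤ s i) ∧ (covMat V s).PosDef ∧ c ≤ remlLogLik V y s} := by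
  classical
  have hn : 0 < n := lt_of_le_of_lt (Nat.zero_le q) hqn
  have hnne : Nonempty (Fin n) := Fin.pos_iff_nonempty.mp hn
  have hdotnn : ∀ x : Fin n → ℝ, 0 ≤ x ⬝ᵥ x := fun x =>
    Finset.sum_nonneg fun i _ => mul_self_nonneg (x i)
  -- smallest eigenvalue of V 0
  set lam0 : ℝ := Finset.univ.inf' Finset.univ_nonempty hV0.isHermitian.eigenvalues with hlam0def
  obtain ⟨j₀, _, hj₀⟩ := Finset.exists_mem_eq_inf' Finset.univ_nonempty hV0.isHermitian.eigenvalues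
  have hlam0pos : 0 < lam0 := by rw [hlam0def, hj₀]; exact hV0.eigenvalues_pos j₀
  have hlam0le : ∀ j, lam0 ≤ hV0.isHermitian.eigenvalues j := fun j =>
    Finset.inf'_le _ (Finset.mem_univ j)
  have hquad0 : ∀ x : Fin n → ℝ, lam0 * (x ⬝ᵥ x) ≤ x ⬝ᵥ V 0 *ᵥ x := fun x =>
    quad_ge_of_psd_sub (mySub_smul_one_psd hV0.isHermitian hlam0le) x
  -- the separating vector w
  obtain ⟨w, hwH, hwy⟩ := exists_w V y hy
  have hw0 : w ≠ 0 := fun h => hwy (by simp [h])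
  set β := w ⬝ᵥ V 0 *ᵥ w with hβdef
  have hβ : 0 < β := by
    have := hV0.dotProduct_mulVec_pos hw0
    rwa [star_trivial] at this
  set γ := w ⬝ᵥ y with hγdef
  set K := γ ^ 2 / (2 * β) with hKdef
  have hγne : γ ≠ 0 := hwy
  have hK : 0 < K := by
    apply div_pos _ (by linarith)
    positivity
  set f : ℝ → ℝ := fun t => -((n:ℝ)/2) * Real.log (t * lam0) - K / t with hfdef
  -- quadratic form lower bound for covMat
  have hquadS : ∀ s : Fin (m+1) → ℝ, (∀ i, 0 ≤ s i) →
      ∀ x : Fin n → ℝ, (s 0 * lam0) * (x ⬝ᵥ x) ≤ x ⬝ᵥ covMat V s *ᵥ x := by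
    intro s hs x
    rw [covMat_quad, Fin.sum_univ_succ]
    have h0 : s 0 * (lam0 * (x ⬝ᵥ x)) ≤ s 0 * (x ⬝ᵥ V 0 *ᵥ x) :=
      mul_le_mul_of_nonneg_left (hquad0 x) (hs 0)
    have hrest : 0 ≤ ∑ i : Fin m, s i.succ * (x ⬝ᵥ V i.succ *ᵥ x) := by
      apply Finset.sum_nonneg
      intro i _
      apply mul_nonneg (hs _)
      have := (hV i.succ).dotProduct_mulVec_nonneg x
      rwa [star_trivial] at this
    have heq : s 0 * lam0 * (x ⬝ᵥ x) = s 0 * (lam0 * (x ⬝ᵥ x)) := by ring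
    linarith
  -- KEY 1
  have key1 : ∀ s : Fin (m+1) → ℝ, (∀ i, 0 ≤ s i) → (covMat V s).PosDef →
      0 < s 0 ∧ remlLogLik V y s ≤ f (s 0) := by
    intro s hs hpd
    have hwΩw : w ⬝ᵥ covMat V s *ᵥ w = s 0 * β := by
      rw [covMat_quad, Fin.sum_univ_succ]
      have hz : ∀ i : Fin m, s i.succ * (w ⬝ᵥ V i.succ *ᵥ w) = 0 := by
        intro i
        rw [hwH _ (mem_spanH V (Fin.succ_ne_zero i) w), mul_zero]
      rw [Finset.sum_eq_zero (fun i _ => hz i), add_zero, hβdef]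
    have hs0 : 0 < s 0 := by
      have hp := hpd.dotProduct_mulVec_pos hw0
      rw [star_trivial, hwΩw] at hp
      nlinarith [hβ, hp]
    refine ⟨hs0, ?_⟩
    have hΩherm := covMat_herm V hV s
    have hdet1 : (s 0 * lam0) ^ n ≤ (covMat V s).det :=
      myDet_ge_pow hΩherm (by positivity) (hquadS s hs)
    have hdetpos := hpd.det_pos
    have hlog : (n:ℝ) * Real.log (s 0 * lam0) ≤ Real.log (covMat V s).det := by
      rw [← Real.log_pow]
      exact Real.log_le_log (by positivity) hdet1
    set z := (covMat V s)⁻¹ *ᵥ y with hzdef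
    have hΩz : covMat V s *ᵥ z = y := by
      rw [hzdef, Matrix.mulVec_mulVec,
        Matrix.mul_nonsing_inv _ (isUnit_iff_ne_zero.mpr hdetpos.ne'), Matrix.one_mulVec]
    have hcs := cs_psd hpd.posSemidef w z
    rw [hΩz] at hcs
    have h2 : z ⬝ᵥ y = y ⬝ᵥ (covMat V s)⁻¹ *ᵥ y := by
      rw [dotProduct_comm, hzdef]
    rw [h2, hwΩw, ← hγdef] at hcs
    have hq2 : γ ^ 2 / (s 0 * β) ≤ y ⬝ᵥ (covMat V s)⁻¹ *ᵥ y := by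
      rw [div_le_iff₀ (by positivity)]
      linarith
    have hKs : K / s 0 = (1/2) * (γ ^ 2 / (s 0 * β)) := by
      rw [hKdef]
      field_simp
    have hLdef : remlLogLik V y s = -(1/2 : ℝ) * Real.log (covMat V s).det -
        (1/2 : ℝ) * (y ⬝ᵥ (covMat V s)⁻¹ *ᵥ y) := rfl
    rw [hLdef, hfdef]
    have hhalf : -(1/2 : ℝ) * Real.log (covMat V s).det ≤
        -((n:ℝ)/2) * Real.log (s 0 * lam0) := by nlinarith [hlog]
    have hhalf2 : -(1/2 : ℝ) * (y ⬝ᵥ (covMat V s)⁻¹ *ᵥ y) ≤ -(K / s 0) := by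
      rw [hKs]; nlinarith [hq2]
    simp only
    linarith
  -- thresholds a (lower) and b0 (upper) for s 0
  obtain ⟨u0, hu0⟩ := eventually_atTop.mp
    ((tendsto_f_inv_atTop n hn lam0 K hlam0pos hK).eventually_lt_atBot c)
  set a : ℝ := (max u0 1)⁻¹ with hadef
  have hmaxpos : (0:ℝ) < max u0 1 := lt_of_lt_of_le one_pos (le_max_right _ _)
  have ha : 0 < a := by rw [hadef]; positivity
  have hafact : ∀ t : ℝ, 0 < t → t ≤ a → f t < c := by
    intro t ht hta
    have hu : max u0 1 ≤ t⁻¹ := by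
      rw [← inv_inv (max u0 1)]
      exact inv_anti₀ ht hta
    have h := hu0 t⁻¹ (le_trans (le_max_left _ _) hu)
    rw [hfdef]
    simp only [inv_inv] at h
    simpa [neg_mul] using h
  obtain ⟨b0, hb0⟩ := eventually_atTop.mp
    ((tendsto_f_atTop n hn lam0 K hlam0pos hK).eventually_lt_atBot c)
  -- upper bounds for the other coordinates
  set A := a * lam0 with hAdef
  have hApos : 0 < A := by rw [hAdef]; positivity
  set R : Fin (m+1) → ℝ := fun i => if i = 0 then b0 else
    (n:ℝ) * Real.exp (-(2*c)) / (A^(n-1) * (V i).trace) with hRdef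
  set lo : Fin (m+1) → ℝ := fun i => if i = 0 then a else 0 with hlodef
  set clamp : (Fin (m+1) → ℝ) → Fin (m+1) → ℝ := fun s i => max (lo i) (s i) with hclampdef
  have hclamp_cont : Continuous clamp :=
    continuous_pi fun i => continuous_const.max (continuous_apply i)
  have hclamp_nonneg : ∀ s i, 0 ≤ clamp s i := by
    intro s i
    rw [hclampdef]
    by_cases hi : i = 0
    · subst hi
      simp only [hlodef, if_pos rfl]
      exact le_trans ha.le (le_max_left _ _)
    · simp only [hlodef, if_neg hi]
      exact le_max_left _ _
  have hclamp_0 : ∀ s, a ≤ clamp s 0 := by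
    intro s
    rw [hclampdef]
    simp only [hlodef, if_pos rfl]
    exact le_max_left _ _
  have hclamp_pd : ∀ s, (covMat V (clamp s)).PosDef := fun s =>
    covMat_posDef V hV hV0 (hclamp_nonneg s) (lt_of_lt_of_le ha (hclamp_0 s))
  have hgcont : Continuous (fun s => remlLogLik V y (clamp s)) :=
    cont_reml_comp V y hclamp_cont (fun s => (hclamp_pd s).det_pos.ne')
  -- KEY 2 : coordinate bounds for members
  have key2 : ∀ s : Fin (m+1) → ℝ, (∀ i, 0 ≤ s i) → (covMat V s).PosDef →
      c ≤ remlLogLik V y s → ∀ i, lo i ≤ s i ∧ s i ≤ R i := by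
    intro s hs hpd hc
    obtain ⟨hs0, hbound⟩ := key1 s hs hpd
    have hfa : ¬ (f (s 0) < c) := not_lt.mpr (le_trans hc hbound)
    have has0 : a ≤ s 0 := by
      by_contra hcon
      push_neg at hcon
      exact hfa (hafact _ hs0 hcon.le)
    have hbs0 : s 0 ≤ b0 := by
      by_contra hcon
      push_neg at hcon
      exact hfa (hb0 _ hcon.le)
    intro i
    by_cases hi : i = 0
    · subst hi
      refine ⟨?_, ?_⟩
      · simp only [hlodef, if_pos rfl]; exact has0
      · simp only [hRdef, if_pos rfl]; exact hbs0
    refine ⟨by simp only [hlodef, if_neg hi]; exact hs i, ?_⟩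
    -- bound s i for i ≠ 0
    have htri : 0 < (V i).trace := trace_pos_of_psd_ne (hV i) (hVne i hi)
    have hΩherm := covMat_herm V hV s
    have hquadA : ∀ x : Fin n → ℝ, A * (x ⬝ᵥ x) ≤ x ⬝ᵥ covMat V s *ᵥ x := by
      intro x
      have h1 : A * (x ⬝ᵥ x) ≤ (s 0 * lam0) * (x ⬝ᵥ x) := by
        apply mul_le_mul_of_nonneg_right _ (hdotnn x)
        rw [hAdef]
        exact mul_le_mul_of_nonneg_right has0 hlam0pos.le
      exact le_trans h1 (hquadS s hs x)
    have hdet2 : A^(n-1) * ((covMat V s).trace / n) ≤ (covMat V s).det :=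
      myDet_ge_trace hΩherm hApos hn hquadA
    have htr2 : s i * (V i).trace ≤ (covMat V s).trace := by
      rw [covMat_trace]
      apply Finset.single_le_sum (f := fun j => s j * (V j).trace) _ (Finset.mem_univ i)
      intro j _
      exact mul_nonneg (hs j) (trace_nonneg_of_psd (hV j))
    have hdetpos := hpd.det_pos
    have hLle : remlLogLik V y s ≤ -(1/2 : ℝ) * Real.log (covMat V s).det := by
      have hnn : 0 ≤ y ⬝ᵥ (covMat V s)⁻¹ *ᵥ y := by
        have := (hpd.inv.posSemidef).dotProduct_mulVec_nonneg y
        rwa [star_trivial] at this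
      have hLdef : remlLogLik V y s = -(1/2 : ℝ) * Real.log (covMat V s).det -
          (1/2 : ℝ) * (y ⬝ᵥ (covMat V s)⁻¹ *ᵥ y) := rfl
      rw [hLdef]; linarith
    have hlogle : Real.log (covMat V s).det ≤ -(2*c) := by
      have := le_trans hc hLle
      linarith
    have hdetle : (covMat V s).det ≤ Real.exp (-(2*c)) :=
      (Real.log_le_iff_le_exp hdetpos).mp hlogle
    have hXle : A^(n-1) * (s i * (V i).trace / n) ≤ Real.exp (-(2*c)) := by
      refine le_trans (le_trans ?_ hdet2) hdetle
      gcongr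
    have hXle' : A^(n-1) * (s i * (V i).trace) ≤ (n:ℝ) * Real.exp (-(2*c)) := by
      have hcalc : A^(n-1) * (s i * (V i).trace) =
          (A^(n-1) * (s i * (V i).trace / n)) * n := by
        field_simp
      rw [hcalc]
      calc (A^(n-1) * (s i * (V i).trace / n)) * n ≤ Real.exp (-(2*c)) * n :=
            mul_le_mul_of_nonneg_right hXle (by positivity)
        _ = (n:ℝ) * Real.exp (-(2*c)) := by ring
    simp only [hRdef, if_neg hi]
    rw [le_div_iff₀ (by positivity)]
    calc s i * (A^(n-1) * (V i).trace) = A^(n-1) * (s i * (V i).trace) := by ring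
      _ ≤ (n:ℝ) * Real.exp (-(2*c)) := hXle'
  -- final set identity and compactness
  suffices hSeq : {s : Fin (m + 1) → ℝ |
      (∀ i, 0 ≤ s i) ∧ (covMat V s).PosDef ∧ c ≤ remlLogLik V y s} =
      (Set.univ.pi fun i => Set.Icc (lo i) (R i)) ∩
      {s | c ≤ remlLogLik V y (clamp s)} by
    rw [hSeq]
    exact (isCompact_univ_pi fun i => isCompact_Icc).inter_right
      (isClosed_le continuous_const hgcont)
  ext s
  simp only [Set.mem_setOf_eq, Set.mem_inter_iff, Set.mem_pi, Set.mem_univ, Set.mem_Icc,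
    forall_true_left]
  constructor
  · rintro ⟨hs, hpd, hc⟩
    have hbounds := key2 s hs hpd hc
    have hcl : clamp s = s := by
      funext i
      rw [hclampdef]
      exact max_eq_right (hbounds i).1
    exact ⟨fun i => hbounds i, by rw [hcl]; exact hc⟩
  · rintro ⟨hbox, hc'⟩
    have hlos : ∀ i, lo i ≤ s i := fun i => (hbox i).1
    have hs : ∀ i, 0 ≤ s i := by
      intro i
      by_cases hi : i = 0
      · subst hi
        refine le_trans ha.le ?_
        have := hlos 0
        simpa [hlodef] using this
      · have := hlos i
        simpa [hlodef, hi] using this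
    have hs0 : 0 < s 0 := by
      refine lt_of_lt_of_le ha ?_
      have := hlos 0
      simpa [hlodef] using this
    have hpd := covMat_posDef V hV hV0 hs hs0
    have hcl : clamp s = s := by
      funext i
      rw [hclampdef]
      exact max_eq_right (hlos i)
    rw [hcl] at hc'
    exact ⟨hs, hpd, hc'⟩
end

section
/- Let A and B be real n×n symmetric positive definite matrices, and let L be an invertible real n×n matrix with B = L·Lᵀ. Then Y = (Lᵀ)⁻¹·(Lᵀ A L)^{1/2}·L⁻¹, where (Lᵀ A L)^{1/2} is the (unique) positive semidefinite square root of the positive definite matrix Lᵀ A L, is positive definite and satisfies Y·B·Y = A. Moreover Y is the unique positive definite solution: if Z is positive definite and Z·B·Z = A, then Z = Y. -/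
open Matrix

lemma psd_posDef_of_isUnit {n : ℕ} {S : Matrix (Fin n) (Fin n) ℝ}
    (hS : S.PosSemidef) (hu : IsUnit S) : S.PosDef := by
  refine Matrix.PosDef.of_dotProduct_mulVec_pos hS.1 (fun x hx => lt_of_le_of_ne' (hS.dotProduct_mulVec_nonneg x) ?_)
  intro h
  rw [hS.dotProduct_mulVec_zero_iff] at h
  have hinj := Matrix.mulVec_injective_iff_isUnit.mpr hu
  exact hx (hinj (h.trans (Matrix.mulVec_zero S).symm))

lemma posDef_conj {n : ℕ} {M C : Matrix (Fin n) (Fin n) ℝ}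
    (hM : M.PosDef) (hC : IsUnit C.det) : (Cᵀ * M * C).PosDef := by
  refine Matrix.PosDef.of_dotProduct_mulVec_pos (by
    have := Matrix.isHermitian_conjTranspose_mul_mul C hM.1
    simpa using this) (fun x hx => ?_)
  have hinj := Matrix.mulVec_injective_iff_isUnit.mpr
    ((Matrix.isUnit_iff_isUnit_det _).mpr hC)
  have hCx : C *ᵥ x ≠ 0 := fun h => hx (hinj (h.trans (Matrix.mulVec_zero C).symm))
  have hpos := hM.dotProduct_mulVec_pos hCx
  have hkey : star x ⬝ᵥ (Cᵀ * M * C) *ᵥ x = star (C *ᵥ x) ⬝ᵥ M *ᵥ (C *ᵥ x) := by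
    rw [← Matrix.mulVec_mulVec, ← Matrix.mulVec_mulVec, Matrix.dotProduct_mulVec,
      Matrix.vecMul_transpose]
    simp [Matrix.dotProduct_mulVec]
  rw [hkey]
  exact hpos

/-- Riccati equation: for positive definite `A`, `B` with `B = L Lᵀ`
(`L` invertible), and `S` the positive semidefinite square root of `Lᵀ A L`, the matrix
`Y = (Lᵀ)⁻¹ S L⁻¹` is the unique positive definite solution of `Y B Y = A`. -/
theorem riccati_unique_posDef_solution (n : ℕ) (A B L S : Matrix (Fin n) (Fin n) ℝ)
    (hA : A.PosDef) (hB : B.PosDef) (hL : IsUnit L.det) (hBL : B = L * Lᵀ)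
    (hS : S.PosSemidef) (hSsq : S * S = Lᵀ * A * L) :
    ((Lᵀ)⁻¹ * S * L⁻¹).PosDef ∧
    ((Lᵀ)⁻¹ * S * L⁻¹) * B * ((Lᵀ)⁻¹ * S * L⁻¹) = A ∧
    ∀ Z : Matrix (Fin n) (Fin n) ℝ, Z.PosDef → Z * B * Z = A →
      Z = (Lᵀ)⁻¹ * S * L⁻¹ := by
  have hLT : IsUnit Lᵀ.det := by simpa [Matrix.det_transpose] using hL
  have hLAL : (Lᵀ * A * L).PosDef := by
    have := posDef_conj hA hL
    simpa using this
  have hSunit : IsUnit S := by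
    have hdet : IsUnit (S.det * S.det) := by
      have := hLAL.det_pos
      rw [← Matrix.det_mul, hSsq]
      exact this.ne'.isUnit
    exact (Matrix.isUnit_iff_isUnit_det _).mpr (isUnit_of_mul_isUnit_left hdet)
  have hSpd : S.PosDef := psd_posDef_of_isUnit hS hSunit
  have hLi : IsUnit L := (Matrix.isUnit_iff_isUnit_det _).mpr hL
  have hLTi : IsUnit Lᵀ := (Matrix.isUnit_iff_isUnit_det _).mpr hLT
  have hinv1 : L⁻¹ * L = 1 := Matrix.nonsing_inv_mul L hL
  have hinv2 : Lᵀ * (Lᵀ)⁻¹ = 1 := Matrix.mul_nonsing_inv Lᵀ hLT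
  have hinv3 : (Lᵀ)⁻¹ * Lᵀ = 1 := Matrix.nonsing_inv_mul Lᵀ hLT
  have hinv4 : L * L⁻¹ = 1 := Matrix.mul_nonsing_inv L hL
  have hYpd : ((Lᵀ)⁻¹ * S * L⁻¹).PosDef := by
    have h1 : (Lᵀ)⁻¹ = (L⁻¹)ᵀ := (Matrix.transpose_nonsing_inv L).symm
    rw [h1]
    exact posDef_conj hSpd (by
      simpa [Matrix.det_nonsing_inv] using Matrix.isUnit_nonsing_inv_det L hL)
  have hYeq : ((Lᵀ)⁻¹ * S * L⁻¹) * B * ((Lᵀ)⁻¹ * S * L⁻¹) = A := by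
    rw [hBL]
    calc (Lᵀ)⁻¹ * S * L⁻¹ * (L * Lᵀ) * ((Lᵀ)⁻¹ * S * L⁻¹)
        = (Lᵀ)⁻¹ * (S * ((L⁻¹ * L) * (Lᵀ * (Lᵀ)⁻¹)) * S) * L⁻¹ := by
          simp only [Matrix.mul_assoc]
      _ = (Lᵀ)⁻¹ * (S * S) * L⁻¹ := by rw [hinv1, hinv2]; simp [Matrix.mul_assoc]
      _ = (Lᵀ)⁻¹ * (Lᵀ * A * L) * L⁻¹ := by rw [hSsq]
      _ = ((Lᵀ)⁻¹ * Lᵀ) * A * (L * L⁻¹) := by simp only [Matrix.mul_assoc]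
      _ = A := by rw [hinv3, hinv4, Matrix.one_mul, Matrix.mul_one]
  refine ⟨hYpd, hYeq, fun Z hZ hZeq => ?_⟩
  have hZL : (Lᵀ * Z * L).PosSemidef := (posDef_conj hZ hL).posSemidef
  have hsq : (Lᵀ * Z * L) * (Lᵀ * Z * L) = S * S := by
    rw [hSsq, ← hZeq, hBL]
    simp only [Matrix.mul_assoc]
  have : Lᵀ * Z * L = S := by
    open scoped MatrixOrder in
    exact (CFC.sq_eq_sq_iff _ _ hZL.nonneg hS.nonneg).mp (by rw [pow_two, pow_two, hsq])
  calc Z = ((Lᵀ)⁻¹ * Lᵀ) * Z * (L * L⁻¹) := by rw [hinv3, hinv4]; simp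
    _ = (Lᵀ)⁻¹ * (Lᵀ * Z * L) * L⁻¹ := by simp only [Matrix.mul_assoc]
    _ = (Lᵀ)⁻¹ * S * L⁻¹ := by rw [this]
end

section
/- Let Γ₁,…,Γ_m and Γ₁',…,Γ_m' be real d×d symmetric positive definite matrices and V₁,…,V_m be real n×n symmetric positive definite matrices. Set Ω = Σᵢ Γᵢ ⊗ Vᵢ and Ω' = Σᵢ Γᵢ' ⊗ Vᵢ (Kronecker products), so Ω is positive definite. Then Ω'·Ω⁻¹·Ω' ⪯ Σᵢ (Γᵢ'·Γᵢ⁻¹·Γᵢ') ⊗ Vᵢ in the Loewner order; that is, Σᵢ (Γᵢ'Γᵢ⁻¹Γᵢ') ⊗ Vᵢ − Ω'Ω⁻¹Ω' is positive semidefinite. -/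
open Matrix
open scoped Kronecker

private lemma kron_ct {l m : Type*} [Fintype l] [Fintype m]
    (A : Matrix l l ℝ) (B : Matrix m m ℝ) :
    (A ⊗ₖ B)ᴴ = Aᴴ ⊗ₖ Bᴴ := by
  ext ⟨i, k⟩ ⟨j, t⟩
  simp [conjTranspose_apply]

private lemma psd_kron {l m : Type*} [Fintype l] [Fintype m] [DecidableEq l] [DecidableEq m]
    {A : Matrix l l ℝ} {B : Matrix m m ℝ}
    (hA : A.PosSemidef) (hB : B.PosSemidef) : (A ⊗ₖ B).PosSemidef := by
  exact hA.kronecker hB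

private lemma pd_kron {l m : Type*} [Fintype l] [Fintype m] [DecidableEq l] [DecidableEq m]
    {A : Matrix l l ℝ} {B : Matrix m m ℝ}
    (hA : A.PosDef) (hB : B.PosDef) : (A ⊗ₖ B).PosDef := by
  have hpsd := psd_kron hA.posSemidef hB.posSemidef
  have hu : IsUnit (A ⊗ₖ B).det := by
    rw [det_kronecker]
    exact ((hA.det_pos.ne').isUnit.pow _).mul ((hB.det_pos.ne').isUnit.pow _)
  refine ⟨hpsd.1, fun x hx => lt_of_le_of_ne (hpsd.2 x) (Ne.symm fun h => hx ?_)⟩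
  have h0 : (A ⊗ₖ B) *ᵥ x = 0 := (hpsd.dotProduct_mulVec_zero_iff x).mp
    (by simpa [dotProduct, mulVec, Finsupp.sum_fintype, Finset.mul_sum, mul_assoc] using h)
  have hinj := mulVec_injective_iff_isUnit.mpr ((isUnit_iff_isUnit_det _).mpr hu)
  exact Finsupp.coe_eq_zero.mp (hinj (by rw [h0, mulVec_zero]))

private lemma psd_sum {ι N : Type*} [Fintype N] (s : Finset ι) (f : ι → Matrix N N ℝ)
    (h : ∀ i ∈ s, (f i).PosSemidef) : (∑ i ∈ s, f i).PosSemidef := by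
  classical
  induction s using Finset.induction with
  | empty => simpa using (PosSemidef.zero : (0 : Matrix N N ℝ).PosSemidef)
  | insert _ _ hx ih =>
      rw [Finset.sum_insert hx]
      exact (h _ (Finset.mem_insert_self _ _)).add
        (ih fun i hi => h i (Finset.mem_insert_of_mem hi))

/-- Kronecker-product majorization: for positive definite `Γᵢ`, `Γᵢ'`
(`d×d`) and `Vᵢ` (`n×n`), with `Ω = ∑ Γᵢ ⊗ Vᵢ` and `Ω' = ∑ Γᵢ' ⊗ Vᵢ`, one has
`Ω' Ω⁻¹ Ω' ⪯ ∑ (Γᵢ' Γᵢ⁻¹ Γᵢ') ⊗ Vᵢ` in the Loewner order. -/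
theorem kronecker_mm_majorization (m d n : ℕ)
    (Γ Γ' : Fin m → Matrix (Fin d) (Fin d) ℝ)
    (V : Fin m → Matrix (Fin n) (Fin n) ℝ)
    (hΓ : ∀ i, (Γ i).PosDef) (hΓ' : ∀ i, (Γ' i).PosDef)
    (hV : ∀ i, (V i).PosDef) :
    ((∑ i, (Γ' i * (Γ i)⁻¹ * Γ' i) ⊗ₖ V i) -
      (∑ i, Γ' i ⊗ₖ V i) * (∑ i, Γ i ⊗ₖ V i)⁻¹ * (∑ i, Γ' i ⊗ₖ V i)).PosSemidef := by
  rcases Nat.eq_zero_or_pos m with hm | hm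
  · subst hm
    simpa using (PosSemidef.zero : (0 : Matrix (Fin d × Fin n) (Fin d × Fin n) ℝ).PosSemidef)
  set Ω : Matrix (Fin d × Fin n) (Fin d × Fin n) ℝ := ∑ i, Γ i ⊗ₖ V i with hΩdef
  set Ω' : Matrix (Fin d × Fin n) (Fin d × Fin n) ℝ := ∑ i, Γ' i ⊗ₖ V i with hΩ'def
  set S : Matrix (Fin d × Fin n) (Fin d × Fin n) ℝ :=
    ∑ i, (Γ' i * (Γ i)⁻¹ * Γ' i) ⊗ₖ V i with hSdef
  have i0 : Fin m := ⟨0, hm⟩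
  -- Ω is positive definite
  have hΩpd : Ω.PosDef := by
    rw [hΩdef, ← Finset.add_sum_erase _ _ (Finset.mem_univ i0)]
    exact (pd_kron (hΓ i0) (hV i0)).add_posSemidef
      (psd_sum _ _ fun i _ => (pd_kron (hΓ i) (hV i)).posSemidef)
  haveI : Invertible Ω := hΩpd.isUnit.invertible
  -- each small block matrix is PSD
  have hblk : ∀ i : Fin m,
      (fromBlocks (Γ i) (Γ' i) (Γ' i) (Γ' i * (Γ i)⁻¹ * Γ' i)).PosSemidef := by
    intro i
    haveI : Invertible (Γ i) := (hΓ i).isUnit.invertible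
    have he : (Γ' i)ᴴ = Γ' i := (hΓ' i).1
    have h := (PosDef.fromBlocks₁₁ (Γ' i) (Γ' i * (Γ i)⁻¹ * Γ' i) (hΓ i)).mpr
      (by rw [he]; simpa using (PosSemidef.zero : (0 : Matrix (Fin d) (Fin d) ℝ).PosSemidef))
    rwa [he] at h
  -- big blocks are PSD
  have hbig : ∀ i : Fin m,
      (fromBlocks (Γ i ⊗ₖ V i) (Γ' i ⊗ₖ V i) (Γ' i ⊗ₖ V i)
        ((Γ' i * (Γ i)⁻¹ * Γ' i) ⊗ₖ V i)).PosSemidef := by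
    intro i
    have h := (psd_kron (hblk i) (hV i).posSemidef).submatrix
      (fun p => (Equiv.sumProdDistrib (Fin d) (Fin d) (Fin n)).symm p)
    convert h using 1
    ext x y
    rcases x with ⟨xi, xk⟩ | ⟨xi, xk⟩ <;> rcases y with ⟨yi, yk⟩ | ⟨yi, yk⟩ <;>
      simp [fromBlocks, Equiv.sumProdDistrib, submatrix_apply]
  -- sum them up
  have hsum : (fromBlocks Ω Ω' Ω' S).PosSemidef := by
    have := psd_sum Finset.univ
      (fun i => fromBlocks (Γ i ⊗ₖ V i) (Γ' i ⊗ₖ V i) (Γ' i ⊗ₖ V i)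
        ((Γ' i * (Γ i)⁻¹ * Γ' i) ⊗ₖ V i)) (fun i _ => hbig i)
    convert this using 1
    ext x y
    rcases x with x | x <;> rcases y with y | y <;>
      simp [Matrix.sum_apply, fromBlocks, hΩdef, hΩ'def, hSdef]
  -- Schur complement
  have hΩ'H : Ω'ᴴ = Ω' := (psd_sum Finset.univ _
    (fun i _ => psd_kron (hΓ' i).posSemidef (hV i).posSemidef)).1
  have hsum2 : (fromBlocks Ω Ω' Ω'ᴴ S).PosSemidef := by rwa [hΩ'H]
  have hfin := (PosDef.fromBlocks₁₁ Ω' S hΩpd).mp hsum2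
  rwa [hΩ'H] at hfin
end

section
/- Let V be a real n×n symmetric positive semidefinite matrix with strictly positive diagonal entries, and let Ω be a real nd×nd symmetric positive definite matrix (indexed by pairs in {1,…,d}×{1,…,n}). Then the d×d matrix M = (I_d ⊗ 1_n)ᵀ · [ (1_d 1_dᵀ ⊗ V) ⊙ Ω⁻¹ ] · (I_d ⊗ 1_n) is symmetric positive definite, where 1_k denotes the column vector of k ones, ⊗ the Kronecker product, and ⊙ the Hadamard (entrywise) product. -/
open Matrix
open scoped Kronecker
open scoped Matrix

/-- The `nd × d` matrix `I_d ⊗ 1_n`, where `1_n` is the column vector of ones. -/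
noncomputable def idKronOnes (d n : ℕ) : Matrix (Fin d × Fin n) (Fin d × Fin 1) ℝ :=
  (1 : Matrix (Fin d) (Fin d) ℝ) ⊗ₖ (Matrix.of fun (_ : Fin n) (_ : Fin 1) => (1 : ℝ))

/-- The all-ones `d × d` matrix `1_d 1_dᵀ`. -/
noncomputable def onesMat (d : ℕ) : Matrix (Fin d) (Fin d) ℝ :=
  Matrix.of fun _ _ => (1 : ℝ)

lemma quad_expand {m : Type*} [Fintype m] (M : Matrix m m ℝ) (x : m → ℝ) :
    x ⬝ᵥ M *ᵥ x = ∑ i, ∑ j, x i * (M i j * x j) := by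
  simp [dotProduct, mulVec, Finset.mul_sum]

lemma schur_posDef {m : Type*} [Fintype m] [DecidableEq m] {K W : Matrix m m ℝ}
    (hK : K.PosSemidef) (hKd : ∀ i, 0 < K i i) (hW : W.PosDef) :
    (K.hadamard W).PosDef := by
  have hKs : ∀ i j, K j i = K i j := fun i j => by
    conv_lhs => rw [← hK.1]
    simp [conjTranspose_apply]
  have hWs : ∀ i j, W j i = W i j := fun i j => by
    conv_lhs => rw [← hW.1]
    simp [conjTranspose_apply]
  obtain ⟨B, hBsym, hBK⟩ : ∃ B : Matrix m m ℝ, (∀ i j, B i j = B j i) ∧ B * B = K := by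
    open scoped MatrixOrder in
    refine ⟨CFC.sqrt K, fun i j => ?_, CFC.sqrt_mul_sqrt_self K hK.nonneg⟩
    open scoped MatrixOrder in
    conv_lhs => rw [← (CFC.sqrt_nonneg K).posSemidef.1]
    simp [conjTranspose_apply]
  have hKB : ∀ i j, K i j = ∑ k, B k i * B k j := by
    intro i j
    conv_lhs => rw [← hBK]
    rw [Matrix.mul_apply]
    exact Finset.sum_congr rfl fun k _ => by rw [hBsym i k]
  refine posDef_iff_dotProduct_mulVec.mpr ⟨?_, ?_⟩
  · ext i j
    simp only [conjTranspose_apply, hadamard_apply, star_trivial]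
    rw [hKs i j, hWs i j]
  · intro x hx
    have key : star x ⬝ᵥ (K.hadamard W) *ᵥ x
        = ∑ k, (fun i => B k i * x i) ⬝ᵥ W *ᵥ (fun i => B k i * x i) := by
      rw [star_trivial, quad_expand]
      calc ∑ i, ∑ j, x i * ((K.hadamard W) i j * x j)
          = ∑ i, ∑ j, ∑ k, (B k i * x i) * (W i j * (B k j * x j)) := by
            refine Finset.sum_congr rfl fun i _ => Finset.sum_congr rfl fun j _ => ?_
            rw [hadamard_apply, hKB i j]
            simp only [Finset.sum_mul, Finset.mul_sum]
            exact Finset.sum_congr rfl fun k _ => by ring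
        _ = ∑ i, ∑ k, ∑ j, (B k i * x i) * (W i j * (B k j * x j)) :=
            Finset.sum_congr rfl fun i _ => Finset.sum_comm
        _ = ∑ k, ∑ i, ∑ j, (B k i * x i) * (W i j * (B k j * x j)) := Finset.sum_comm
        _ = ∑ k, (fun i => B k i * x i) ⬝ᵥ W *ᵥ (fun i => B k i * x i) :=
            Finset.sum_congr rfl fun k _ => (quad_expand W _).symm
    rw [key]
    obtain ⟨i0, hi0⟩ : ∃ i, x i ≠ 0 := Function.ne_iff.mp hx
    obtain ⟨k0, hk0⟩ : ∃ k, B k i0 ≠ 0 := by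
      by_contra h
      push_neg at h
      have := hKd i0
      rw [hKB i0 i0] at this
      simp [h] at this
    refine Finset.sum_pos' (fun k _ => ?_) ⟨k0, Finset.mem_univ _, ?_⟩
    · have := hW.posSemidef.dotProduct_mulVec_nonneg (fun i => B k i * x i)
      simpa using this
    · have hz : (fun i => B k0 i * x i) ≠ 0 := by
        intro h
        have := congrFun h i0
        simp at this
        rcases this with h1 | h2
        exacts [hk0 h1, hi0 h2]
      have := hW.dotProduct_mulVec_pos hz
      simpa using this

lemma onesKron_posSemidef {n d : ℕ} {V : Matrix (Fin n) (Fin n) ℝ} (hV : V.PosSemidef) :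
    ((onesMat d) ⊗ₖ V).PosSemidef := by
  have hVs : ∀ i j, V j i = V i j := fun i j => by
    conv_lhs => rw [← hV.1]
    simp [conjTranspose_apply]
  have happ : ∀ (p q : Fin d × Fin n), ((onesMat d) ⊗ₖ V) p q = V p.2 q.2 := by
    intro p q
    simp [onesMat, kroneckerMap_apply]
  refine posSemidef_iff_dotProduct_mulVec.mpr ⟨?_, ?_⟩
  · ext p q
    simp only [conjTranspose_apply, star_trivial, happ]
    exact hVs _ _
  · intro x
    rw [star_trivial]
    have key : x ⬝ᵥ ((onesMat d) ⊗ₖ V) *ᵥ x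
        = (fun i => ∑ a, x (a, i)) ⬝ᵥ V *ᵥ (fun i => ∑ a, x (a, i)) := by
      rw [quad_expand, quad_expand]
      simp only [happ, Fintype.sum_prod_type]
      calc ∑ a, ∑ i, ∑ b, ∑ j, x (a, i) * (V i j * x (b, j))
          = ∑ i, ∑ a, ∑ b, ∑ j, x (a, i) * (V i j * x (b, j)) := Finset.sum_comm
        _ = ∑ i, ∑ a, ∑ j, ∑ b, x (a, i) * (V i j * x (b, j)) :=
            Finset.sum_congr rfl fun i _ => Finset.sum_congr rfl fun a _ => Finset.sum_comm
        _ = ∑ i, ∑ j, ∑ a, ∑ b, x (a, i) * (V i j * x (b, j)) :=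
            Finset.sum_congr rfl fun i _ => Finset.sum_comm
        _ = ∑ i, ∑ j, (∑ a, x (a, i)) * (V i j * ∑ b, x (b, j)) := by
            refine Finset.sum_congr rfl fun i _ => Finset.sum_congr rfl fun j _ => ?_
            simp only [Finset.sum_mul, Finset.mul_sum]
            exact Finset.sum_comm
    rw [key]
    have := hV.dotProduct_mulVec_nonneg (fun i => ∑ a, x (a, i))
    simpa using this

/-- the coefficient matrix
`M = (I_d ⊗ 1_n)ᵀ [ (1_d 1_dᵀ ⊗ V) ⊙ Ω⁻¹ ] (I_d ⊗ 1_n)` is positive definite whenever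
`V` is positive semidefinite with strictly positive diagonal and `Ω` is positive
definite. -/
theorem coefficient_matrix_posDef (n d : ℕ) (hn : 0 < n)
    (V : Matrix (Fin n) (Fin n) ℝ) (hV : V.PosSemidef) (hVdiag : ∀ i, 0 < V i i)
    (Ω : Matrix (Fin d × Fin n) (Fin d × Fin n) ℝ) (hΩ : Ω.PosDef) :
    ((idKronOnes d n)ᵀ * (((onesMat d) ⊗ₖ V) ⊙ Ω⁻¹) * idKronOnes d n).PosDef := by
  have hW : (Ω⁻¹).PosDef := hΩ.inv
  have hK : ((onesMat d) ⊗ₖ V).PosSemidef := onesKron_posSemidef hV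
  have hKd : ∀ p, 0 < ((onesMat d) ⊗ₖ V) p p := by
    intro p
    simpa [onesMat, kroneckerMap_apply] using hVdiag p.2
  have hC : ((((onesMat d) ⊗ₖ V)) ⊙ Ω⁻¹).PosDef := schur_posDef hK hKd hW
  set A := idKronOnes d n with hA
  set C := (((onesMat d) ⊗ₖ V)) ⊙ Ω⁻¹ with hCdef
  have hAt : Aᵀ = Aᴴ := by
    ext i j
    simp [conjTranspose_apply]
  have hAv : ∀ (y : Fin d × Fin 1 → ℝ) (c : Fin d) (i : Fin n),
      (A *ᵥ y) (c, i) = y (c, 0) := by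
    intro y c i
    simp [hA, idKronOnes, mulVec, dotProduct, Fintype.sum_prod_type, Matrix.one_apply,
      Fin.sum_univ_one]
  refine posDef_iff_dotProduct_mulVec.mpr ⟨?_, ?_⟩
  · rw [hAt]
    exact isHermitian_conjTranspose_mul_mul _ hC.1
  · intro y hy
    rw [star_trivial]
    have h1 : (Aᵀ * C * A) *ᵥ y = Aᵀ *ᵥ (C *ᵥ (A *ᵥ y)) := by
      rw [← mulVec_mulVec, ← mulVec_mulVec]
    rw [h1, dotProduct_mulVec, vecMul_transpose]
    have hz : A *ᵥ y ≠ 0 := by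
      obtain ⟨p, hp⟩ : ∃ p, y p ≠ 0 := Function.ne_iff.mp hy
      intro h
      apply hp
      have h2 : (A *ᵥ y) (p.1, ⟨0, hn⟩) = 0 := by rw [h]; rfl
      rw [hAv] at h2
      have : p = (p.1, 0) := by
        ext
        · rfl
        · simp [Fin.fin_one_eq_zero]
      rw [this]
      exact h2
    have := hC.dotProduct_mulVec_pos hz
    simpa using this
end

section
/- Let A and B be real n×n symmetric positive semidefinite matrices such that the range of the linear map x ↦ Ax equals the range of the linear map x ↦ Bx. Let P be a real n×n matrix satisfying the four Penrose equations for A (APA = A, PAP = P, (AP)ᵀ = AP, (PA)ᵀ = PA). Then lim_{ε → 0⁺} (B + εI)·(A + εI)⁻¹·(B + εI) = B·P·B; that is, the map ε ↦ (B + εI)(A + εI)⁻¹(B + εI), defined for ε > 0, tends to B A⁺ B as ε tends to 0 from the right. -/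
open Matrix

/-- if `A` and `B` are positive semidefinite with the same range and
`P = A⁺` is the Moore–Penrose pseudoinverse of `A` (characterized by the four Penrose
equations), then `(B + εI)(A + εI)⁻¹(B + εI) → B A⁺ B` as `ε → 0⁺`. -/
theorem limit_eps_reg_eq_pinv (n : ℕ) (A B P : Matrix (Fin n) (Fin n) ℝ)
    (hA : A.PosSemidef) (hB : B.PosSemidef)
    (hrange : LinearMap.range A.mulVecLin = LinearMap.range B.mulVecLin)
    (hP1 : A * P * A = A) (hP2 : P * A * P = P)
    (hP3 : (A * P)ᵀ = A * P) (hP4 : (P * A)ᵀ = P * A) :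
    Filter.Tendsto
      (fun ε : ℝ => (B + ε • (1 : Matrix (Fin n) (Fin n) ℝ)) *
        (A + ε • (1 : Matrix (Fin n) (Fin n) ℝ))⁻¹ *
        (B + ε • (1 : Matrix (Fin n) (Fin n) ℝ)))
      (nhdsWithin 0 (Set.Ioi 0)) (nhds (B * P * B)) := by
  have hAt : Aᵀ = A := by
    rw [← conjTranspose_eq_transpose_of_trivial]; exact hA.isHermitian.eq
  have hBt : Bᵀ = B := by
    rw [← conjTranspose_eq_transpose_of_trivial]; exact hB.isHermitian.eq
  -- basic consequences of the Penrose equations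
  have h1 : A * Pᵀ = P * A := by
    calc A * Pᵀ = (P * Aᵀ)ᵀ := by rw [transpose_mul, transpose_transpose]
    _ = (P * A)ᵀ := by rw [hAt]
    _ = P * A := hP4
  have h2 : Pᵀ * A = A * P := by
    calc Pᵀ * A = (Aᵀ * P)ᵀ := by rw [transpose_mul, transpose_transpose]
    _ = (A * P)ᵀ := by rw [hAt]
    _ = A * P := hP3
  have h3 : A * Pᵀ * A = A := by
    have := congrArg Matrix.transpose hP1
    simpa [transpose_mul, hAt, Matrix.mul_assoc] using this
  have hcomm : A * P = P * A := by
    have e1 : A * P = (P * A) * (A * P) := by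
      conv_lhs => rw [← h3]
      rw [Matrix.mul_assoc, ← h1]
    have e2 : P * A = (P * A) * (A * P) := by
      conv_lhs => rw [← h3]
      rw [show P * (A * Pᵀ * A) = (P * A) * (Pᵀ * A) by noncomm_ring, h2]
    rw [e1, ← e2]
  have hPsym : Pᵀ = P := by
    have e4 : Pᵀ * A * Pᵀ = Pᵀ := by
      have := congrArg Matrix.transpose hP2
      simpa [transpose_mul, hAt, Matrix.mul_assoc] using this
    calc Pᵀ = Pᵀ * A * Pᵀ := e4.symm
    _ = (A * P) * Pᵀ := by rw [h2]
    _ = (P * A) * Pᵀ := by rw [hcomm]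
    _ = P * (A * Pᵀ) := by rw [Matrix.mul_assoc]
    _ = P * (P * A) := by rw [h1]
    _ = P * (A * P) := by rw [hcomm]
    _ = P := by rw [← Matrix.mul_assoc, hP2]
  -- Q = A * P acts as identity on the range of B
  have hQB : (A * P) * B = B := by
    have key : ∀ v, ((A * P) * B) *ᵥ v = B *ᵥ v := by
      intro v
      have hmem : B *ᵥ v ∈ LinearMap.range A.mulVecLin := by
        rw [hrange]
        exact ⟨v, by simp [mulVecLin_apply]⟩
      obtain ⟨y, hy⟩ := hmem
      rw [mulVecLin_apply] at hy
      calc ((A * P) * B) *ᵥ v = (A * P) *ᵥ (B *ᵥ v) := (mulVec_mulVec _ _ _).symm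
      _ = (A * P) *ᵥ (A *ᵥ y) := by rw [hy]
      _ = ((A * P) * A) *ᵥ y := mulVec_mulVec _ _ _
      _ = A *ᵥ y := by rw [hP1]
      _ = B *ᵥ v := hy
    ext i j
    have h := congrFun (key (Pi.single j 1)) i
    simpa using h
  have hBQ : B * (A * P) = B := by
    have := congrArg Matrix.transpose hQB
    simpa [transpose_mul, hP3, hBt] using this
  -- P is positive semidefinite
  have hPsd : P.PosSemidef := by
    have := hA.conjTranspose_mul_mul_same P
    rwa [conjTranspose_eq_transpose_of_trivial, hPsym, hP2] at this
  -- for ε ≥ 0, 1 + ε • P is positive definite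
  have hNdef : ∀ ε : ℝ, 0 ≤ ε → (1 + ε • P : Matrix (Fin n) (Fin n) ℝ).PosDef := by
    intro ε hε
    refine Matrix.PosDef.add_posSemidef Matrix.PosDef.one (Matrix.PosSemidef.of_dotProduct_mulVec_nonneg ?_ ?_)
    · show (ε • P)ᴴ = ε • P
      rw [conjTranspose_smul, hPsd.1.eq]
      simp
    · intro x
      have := hPsd.dotProduct_mulVec_nonneg x
      simp only [smul_mulVec, dotProduct_smul, smul_eq_mul]
      exact mul_nonneg hε this
  -- the explicit formula for the regularized inverse
  have hinv : ∀ ε : ℝ, 0 < ε →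
      (A + ε • (1 : Matrix (Fin n) (Fin n) ℝ))⁻¹ =
        P * (1 + ε • P)⁻¹ + ε⁻¹ • (1 - A * P) := by
    intro ε hε
    apply Matrix.inv_eq_right_inv
    have hN : (1 + ε • P) * (1 + ε • P)⁻¹ = 1 :=
      Matrix.mul_nonsing_inv _ (hNdef ε hε.le).det_pos.ne'.isUnit
    have hAPP : (A * P) * P = P := by rw [hcomm, hP2]
    have hAAP : A * (A * P) = A := by rw [hcomm, ← Matrix.mul_assoc, hP1]
    have key1 : (A + ε • 1) * (P * (1 + ε • P)⁻¹) = A * P := by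
      have : (A + ε • 1) * P = (A * P) * (1 + ε • P) := by
        rw [Matrix.add_mul, Matrix.mul_add, Matrix.mul_one, Matrix.smul_mul,
          Matrix.mul_smul, hAPP, Matrix.one_mul]
      rw [← Matrix.mul_assoc, this, Matrix.mul_assoc, hN, Matrix.mul_one]
    have key2 : (A + ε • 1) * (ε⁻¹ • (1 - A * P)) = 1 - A * P := by
      rw [Matrix.mul_smul, Matrix.add_mul, Matrix.mul_sub, Matrix.mul_one, hAAP,
        sub_self, zero_add, Matrix.smul_mul, Matrix.one_mul, smul_smul,
        inv_mul_cancel₀ hε.ne', one_smul]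
    rw [Matrix.mul_add, key1, key2]
    abel
  -- the function agrees on Ioi 0 with a function continuous at 0
  set G : ℝ → Matrix (Fin n) (Fin n) ℝ := fun ε =>
    (B + ε • 1) * (P * (1 + ε • P)⁻¹) * (B + ε • 1) + ε • (1 - A * P) with hG
  have heq : ∀ ε : ℝ, 0 < ε →
      (B + ε • (1 : Matrix (Fin n) (Fin n) ℝ)) *
        (A + ε • (1 : Matrix (Fin n) (Fin n) ℝ))⁻¹ *
        (B + ε • (1 : Matrix (Fin n) (Fin n) ℝ)) = G ε := by
    intro ε hε
    have hl : (B + ε • 1) * (1 - A * P) = ε • (1 - A * P) := by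
      rw [Matrix.add_mul, Matrix.mul_sub, Matrix.mul_one, hBQ, Matrix.smul_mul,
        Matrix.one_mul]
      abel
    have hr : (1 - A * P) * (B + ε • 1) = ε • (1 - A * P) := by
      rw [Matrix.mul_add, Matrix.sub_mul, Matrix.one_mul, hQB, Matrix.mul_smul,
        Matrix.mul_one]
      abel
    have habs : ∀ (X N D : Matrix (Fin n) (Fin n) ℝ) (c : ℝ),
        X * (N + c • D) * X = X * N * X + c • (X * D * X) := by
      intro X N D c
      rw [Matrix.mul_add, Matrix.add_mul, Matrix.mul_smul, Matrix.smul_mul]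
    have hmid : (B + ε • 1) * (1 - A * P) * (B + ε • 1) = ε • (ε • (1 - A * P)) := by
      rw [hl, Matrix.smul_mul, hr]
    rw [hinv ε hε, habs, hmid, smul_smul, inv_mul_cancel₀ hε.ne', one_smul]
  -- continuity of G at 0
  have hmcont : Continuous fun ε : ℝ => (1 : Matrix (Fin n) (Fin n) ℝ) + ε • P := by
    exact continuous_const.add (continuous_id.smul continuous_const)
  have hinvcont : ContinuousAt (fun ε : ℝ => (1 + ε • P : Matrix (Fin n) (Fin n) ℝ)⁻¹) 0 := by
    have hdet : ContinuousAt (fun ε : ℝ => ((1 + ε • P : Matrix (Fin n) (Fin n) ℝ)).det) 0 :=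
      hmcont.matrix_det.continuousAt
    have h0 : ((1 + (0:ℝ) • P : Matrix (Fin n) (Fin n) ℝ)).det = 1 := by simp
    have hri : ContinuousAt (fun ε : ℝ =>
        Ring.inverse ((1 + ε • P : Matrix (Fin n) (Fin n) ℝ)).det) 0 := by
      simp only [Ring.inverse_eq_inv']
      exact hdet.inv₀ (by rw [h0]; norm_num)
    have hadj : ContinuousAt (fun ε : ℝ =>
        ((1 + ε • P : Matrix (Fin n) (Fin n) ℝ)).adjugate) 0 :=
      hmcont.matrix_adjugate.continuousAt
    simp only [Matrix.inv_def]
    exact hri.smul hadj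
  have hGcont : ContinuousAt G 0 := by
    have hb : ContinuousAt (fun ε : ℝ => B + ε • (1 : Matrix (Fin n) (Fin n) ℝ)) 0 :=
      (continuous_const.add (continuous_id.smul continuous_const)).continuousAt
    have hs : ContinuousAt (fun ε : ℝ => ε • (1 - A * P)) 0 :=
      (continuous_id.smul continuous_const).continuousAt
    exact ((hb.mul (continuousAt_const.mul hinvcont)).mul hb).add hs
  have hG0 : G 0 = B * P * B := by
    simp [hG]
  have hT : Filter.Tendsto G (nhdsWithin 0 (Set.Ioi 0)) (nhds (B * P * B)) := by
    rw [← hG0]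
    exact hGcont.continuousWithinAt.tendsto
  refine hT.congr' ?_
  filter_upwards [self_mem_nhdsWithin] with ε hε
  exact (heq ε hε).symm
end
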